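/- arXiv:2404.19457 — 5 statements merged into one kernel-verified Lean document; each statement's English description precedes it below -/
import Mathlib

section
/- Let X be a real Banach space and D ⊆ X a dense subset. Then the following are equivalent: (1) X has the Daugavet property; (2) for every ε > 0 and all x, z ∈ D, either ‖z‖ ≥ ‖x‖ or z belongs to cl co_ℚ({ y ∈ D : ‖y‖ < ‖x‖ and ‖x − y‖ > 2‖x‖ − ε }). -/
open scoped BigOperators Topology

/-- The set of all rational convex combinations of elements of `A`, closed in norm. -/
def clCoQ {X : Type*} [NormedAddCommGroup X] [NormedSpace ℝ X] (A : Set X) : Set X :=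
  closure {z : X | ∃ (n : ℕ) (q : Fin n → ℚ) (y : Fin n → X),
    (∀ i, 0 < q i) ∧ (∑ i, q i = 1) ∧ (∀ i, y i ∈ A) ∧ z = ∑ i, (q i : ℝ) • y i}

/-- A slice of the closed unit ball of `X`. -/
def IsSlice {X : Type*} [NormedAddCommGroup X] [NormedSpace ℝ X] (S : Set X) : Prop :=
  ∃ (f : X →L[ℝ] ℝ) (α : ℝ), ‖f‖ = 1 ∧ 0 < α ∧
    S = {x : X | ‖x‖ ≤ 1 ∧ 1 - α < f x}

/-- The local diameter `δ` property. -/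
def HasLDP (X : Type*) [NormedAddCommGroup X] [NormedSpace ℝ X] (δ : ℝ) : Prop :=
  ∀ S : Set X, IsSlice S → δ ≤ Metric.diam S

/-- The weak topology of a normed space. -/
def weakTop (X : Type*) [NormedAddCommGroup X] [NormedSpace ℝ X] : TopologicalSpace X :=
  ⨅ f : X →L[ℝ] ℝ, TopologicalSpace.induced (⇑f) inferInstance

/-- The diameter two property. -/
def HasD2P (X : Type*) [NormedAddCommGroup X] [NormedSpace ℝ X] : Prop :=
  ∀ W : Set X, IsOpen[weakTop X] W → (W ∩ {x : X | ‖x‖ ≤ 1}).Nonempty →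
    Metric.diam (W ∩ {x : X | ‖x‖ ≤ 1}) = 2

/-- The diametral diameter two property. -/
def HasDD2P (X : Type*) [NormedAddCommGroup X] [NormedSpace ℝ X] : Prop :=
  ∀ ε > (0 : ℝ), ∀ W : Set X, IsOpen[weakTop X] W →
    ∀ x ∈ W ∩ {x : X | ‖x‖ ≤ 1}, ‖x‖ = 1 →
      ∃ y ∈ W ∩ {x : X | ‖x‖ ≤ 1}, 2 - ε < ‖x - y‖

/-- A convex combination of the sets `S i` with coefficients `lam i`. -/
def combSet {X : Type*} [NormedAddCommGroup X] [NormedSpace ℝ X]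
    (n : ℕ) (lam : Fin n → ℝ) (S : Fin n → Set X) : Set X :=
  {z : X | ∃ y : Fin n → X, (∀ i, y i ∈ S i) ∧ z = ∑ i, lam i • y i}

/-- The strong diameter two property. -/
def HasSD2P (X : Type*) [NormedAddCommGroup X] [NormedSpace ℝ X] : Prop :=
  ∀ (n : ℕ) (lam : Fin n → ℝ) (S : Fin n → Set X),
    (∀ i, 0 < lam i) → (∑ i, lam i = 1) → (∀ i, IsSlice (S i)) →
    Metric.diam (combSet n lam S) = 2

/-- The diametral local diameter two property. -/
def HasDLD2P (X : Type*) [NormedAddCommGroup X] [NormedSpace ℝ X] : Prop :=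
  ∀ ε > (0 : ℝ), ∀ S : Set X, IsSlice S → ∀ x ∈ S, ‖x‖ = 1 →
    ∃ y ∈ S, 2 - ε < ‖x - y‖

/-- The Daugavet property. -/
def HasDaugavet (X : Type*) [NormedAddCommGroup X] [NormedSpace ℝ X] : Prop :=
  ∀ ε > (0 : ℝ), ∀ x : X, ‖x‖ = 1 → ∀ S : Set X, IsSlice S →
    ∃ y ∈ S, 2 - ε < ‖x - y‖

/-- Locally octahedral norm. -/
def IsLOH (X : Type*) [NormedAddCommGroup X] [NormedSpace ℝ X] : Prop :=
  ∀ ε > (0 : ℝ), ∀ x : X, ∃ y : X, ‖y‖ = 1 ∧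
    ∀ t : ℝ, (1 - ε) * (|t| * ‖x‖ + ‖y‖) ≤ ‖t • x + y‖

/-- Octahedral norm. -/
def IsOH (X : Type*) [NormedAddCommGroup X] [NormedSpace ℝ X] : Prop :=
  ∀ E : Submodule ℝ X, FiniteDimensional ℝ E → ∀ ε > (0 : ℝ),
    ∃ y : X, ‖y‖ = 1 ∧ ∀ x ∈ E, (1 - ε) * (‖x‖ + ‖y‖) ≤ ‖x + y‖

/-- Weakly octahedral norm. -/
def IsWOH (X : Type*) [NormedAddCommGroup X] [NormedSpace ℝ X] : Prop :=
  ∀ E : Submodule ℝ X, FiniteDimensional ℝ E → ∀ f : X →L[ℝ] ℝ, ‖f‖ ≤ 1 →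
    ∀ ε > (0 : ℝ), ∃ y : X, ‖y‖ = 1 ∧
      ∀ x ∈ E, (1 - ε) * (|f x| + ‖y‖) ≤ ‖x + y‖

/-- The closed unit ball of `X` is dentable: it has slices of arbitrarily small diameter. -/
def BallDentable (X : Type*) [NormedAddCommGroup X] [NormedSpace ℝ X] : Prop :=
  ∀ ε > (0 : ℝ), ∃ S : Set X, IsSlice S ∧ Metric.diam S < ε

/-- A seminorm on the space `V = ℕ →₀ ℚ` of finitely supported rational sequences. -/
def IsSeminormV (μ : (ℕ →₀ ℚ) → ℝ) : Prop :=
  (∀ (q : ℚ) (v : ℕ →₀ ℚ), μ (q • v) = |(q : ℝ)| * μ v) ∧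
    ∀ u v : ℕ →₀ ℚ, μ (u + v) ≤ μ u + μ v

/-- A seminorm on the space `c00 = ℕ →₀ ℝ` of finitely supported real sequences. -/
def IsSeminormC00 (ν : (ℕ →₀ ℝ) → ℝ) : Prop :=
  (∀ (c : ℝ) (x : ℕ →₀ ℝ), ν (c • x) = |c| * ν x) ∧
    ∀ x y : ℕ →₀ ℝ, ν (x + y) ≤ ν x + ν y

/-- The canonical inclusion of `V` into `c00`. -/
noncomputable def toC00 : (ℕ →₀ ℚ) → (ℕ →₀ ℝ) :=
  Finsupp.mapRange (fun q : ℚ => (q : ℝ)) Rat.cast_zero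

/-- `μ` belongs to `ℬ`: it is a seminorm on `V` whose (unique) seminorm extension to `c00`
is a norm. -/
def InB (μ : (ℕ →₀ ℚ) → ℝ) : Prop :=
  IsSeminormV μ ∧ ∃ ν : (ℕ →₀ ℝ) → ℝ, IsSeminormC00 ν ∧ (∀ v, ν (toC00 v) = μ v) ∧
    ∀ x : ℕ →₀ ℝ, ν x = 0 → x = 0

/-- The Polish space `𝒫` of seminorms on `V`, with the topology of pointwise convergence. -/
abbrev PSp := {μ : (ℕ →₀ ℚ) → ℝ // IsSeminormV μ}

/-- The space `ℬ` of seminorms on `V` whose extension to `c00` is a norm. -/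
abbrev BSp := {μ : (ℕ →₀ ℚ) → ℝ // InB μ}

/-- `X` is (a representative of) the Banach space `X_μ` associated to the seminorm `μ`:
there is a `ℚ`-linear map `ι : V → X` with `‖ι v‖ = μ v` and dense range. -/
def RepOf (μ : (ℕ →₀ ℚ) → ℝ) (X : Type*) [NormedAddCommGroup X] [NormedSpace ℝ X] : Prop :=
  ∃ ι : (ℕ →₀ ℚ) → X, (∀ u v, ι (u + v) = ι u + ι v) ∧
    (∀ (q : ℚ) (v), ι (q • v) = (q : ℝ) • ι v) ∧
    (∀ v, ‖ι v‖ = μ v) ∧ DenseRange ι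


/-- Fσ set: a countable union of closed sets. -/
def IsFsigma {α : Type*} [TopologicalSpace α] (s : Set α) : Prop :=
  ∃ c : ℕ → Set α, (∀ n, IsClosed (c n)) ∧ s = ⋃ n, c n

/-- Fσδ set: a countable intersection of countable unions of closed sets. -/
def IsFsigmaDelta {α : Type*} [TopologicalSpace α] (s : Set α) : Prop :=
  ∃ c : ℕ → ℕ → Set α, (∀ n m, IsClosed (c n m)) ∧ s = ⋂ n, ⋃ m, c n m

/-- Gurariĭ space. -/
def IsGurarii (G : Type*) [NormedAddCommGroup G] [NormedSpace ℝ G] : Prop :=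
  TopologicalSpace.SeparableSpace G ∧
  ∀ (F : Type) [NormedAddCommGroup F] [NormedSpace ℝ F] [FiniteDimensional ℝ F]
    (E : Submodule ℝ F) (f : E →ₗ[ℝ] G), (∀ x : E, ‖f x‖ = ‖(x : F)‖) →
    ∀ ε > (0 : ℝ), ∃ T : F →ₗ[ℝ] G, (∀ x : E, T (x : F) = f x) ∧
      ∀ x : F, (1 + ε)⁻¹ * ‖x‖ ≤ ‖T x‖ ∧ ‖T x‖ ≤ (1 + ε) * ‖x‖

/-- The weak-* topology on the dual of a normed space. -/
def wstar (X : Type*) [NormedAddCommGroup X] [NormedSpace ℝ X] :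
    TopologicalSpace (X →L[ℝ] ℝ) :=
  TopologicalSpace.induced (fun f : X →L[ℝ] ℝ => (f : X → ℝ)) Pi.topologicalSpace

/-- The Szlenk derivative of a subset of the dual of `X`. -/
def szlenkDeriv (X : Type*) [NormedAddCommGroup X] [NormedSpace ℝ X] (ε : ℝ)
    (F : Set (X →L[ℝ] ℝ)) : Set (X →L[ℝ] ℝ) :=
  {f : X →L[ℝ] ℝ | f ∈ F ∧ ∀ U : Set (X →L[ℝ] ℝ), IsOpen[wstar X] U → f ∈ U →
    ε ≤ Metric.diam (U ∩ F)}

/-- A bundled Banach space. -/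
structure BanachSp where
  carrier : Type
  [grp : NormedAddCommGroup carrier]
  [mod : NormedSpace ℝ carrier]
  [cpl : CompleteSpace carrier]

attribute [instance] BanachSp.grp BanachSp.mod BanachSp.cpl

/-- The Banach space `X_μ` associated to the seminorm `μ` satisfies `P`
(stated via arbitrary representatives, which are unique up to linear isometry). -/
def XmuSat (μ : (ℕ →₀ ℚ) → ℝ) (P : BanachSp → Prop) : Prop :=
  ∀ X : BanachSp, RepOf μ X.carrier → P X

/-- The set of elements of `ℬ` whose associated Banach space satisfies `P`. -/
def XmuB (P : BanachSp → Prop) : Set BSp := {μ : BSp | XmuSat μ.1 P}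

/-- The set of elements of `𝒫` whose associated Banach space satisfies `P`. -/
def XmuP (P : BanachSp → Prop) : Set PSp := {μ : PSp | XmuSat μ.1 P}


section daugavetAux

variable {X : Type*} [NormedAddCommGroup X] [NormedSpace ℝ X]

/-- The set of rational convex combinations (before closure). -/
def ratCombos (A : Set X) : Set X :=
  {z : X | ∃ (n : ℕ) (q : Fin n → ℚ) (y : Fin n → X),
    (∀ i, 0 < q i) ∧ (∑ i, q i = 1) ∧ (∀ i, y i ∈ A) ∧ z = ∑ i, (q i : ℝ) • y i}

lemma clCoQ_eq (A : Set X) : clCoQ A = closure (ratCombos A) := rfl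

lemma subset_ratCombos (A : Set X) : A ⊆ ratCombos A := fun a ha =>
  ⟨1, fun _ => 1, fun _ => a, fun _ => one_pos, by simp, fun _ => ha, by simp⟩

lemma ratCombos_norm_le {A : Set X} {R : ℝ} (hA : ∀ a ∈ A, ‖a‖ ≤ R) :
    ∀ w ∈ ratCombos A, ‖w‖ ≤ R := by
  rintro w ⟨n, q, y, hq, hqs, hy, rfl⟩
  have hR : ∑ i, (q i : ℝ) = 1 := by exact_mod_cast hqs
  calc ‖∑ i, (q i:ℝ) • y i‖ ≤ ∑ i, ‖(q i:ℝ) • y i‖ := norm_sum_le _ _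
    _ ≤ ∑ i, (q i:ℝ) * R := Finset.sum_le_sum (fun i _ => by
        rw [norm_smul, Real.norm_eq_abs, abs_of_pos (by exact_mod_cast hq i)]
        exact mul_le_mul_of_nonneg_left (hA _ (hy i)) (le_of_lt (by exact_mod_cast hq i)))
    _ = R := by rw [← Finset.sum_mul, hR, one_mul]

lemma ratCombos_smul_add {A : Set X} {u v : X} (hu : u ∈ ratCombos A) (hv : v ∈ ratCombos A)
    {s : ℚ} (h0 : 0 < s) (h1 : s < 1) :
    (s:ℝ) • u + (1 - (s:ℝ)) • v ∈ ratCombos A := by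
  obtain ⟨n, q, y, hq, hqs, hy, rfl⟩ := hu
  obtain ⟨m, p, zz, hp, hps, hz, rfl⟩ := hv
  refine ⟨n + m, Fin.append (fun i => s * q i) (fun j => (1 - s) * p j), Fin.append y zz,
    ?_, ?_, ?_, ?_⟩
  · intro i
    induction i using Fin.addCases with
    | left i => rw [Fin.append_left]; exact mul_pos h0 (hq i)
    | right j => rw [Fin.append_right]; exact mul_pos (by linarith) (hp j)
  · rw [Fin.sum_univ_add]
    simp only [Fin.append_left, Fin.append_right]
    rw [← Finset.mul_sum, ← Finset.mul_sum, hqs, hps]; ring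
  · intro i
    induction i using Fin.addCases with
    | left i => rw [Fin.append_left]; exact hy i
    | right j => rw [Fin.append_right]; exact hz j
  · rw [Fin.sum_univ_add]
    simp only [Fin.append_left, Fin.append_right]
    rw [Finset.smul_sum, Finset.smul_sum]
    congr 1 <;> refine Finset.sum_congr rfl (fun i _ => ?_)
    · push_cast; rw [mul_smul]
    · push_cast; rw [mul_smul]

lemma clCoQ_convex {A : Set X} {R : ℝ} (hA : ∀ a ∈ A, ‖a‖ ≤ R) :
    Convex ℝ (clCoQ A) := by
  rw [clCoQ_eq]
  intro u hu v hv a b ha hb hab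
  rcases eq_or_lt_of_le ha with ha0 | ha
  · have hb1 : b = 1 := by linarith
    simpa [← ha0, hb1] using hv
  rcases eq_or_lt_of_le hb with hb0 | hb
  · have ha1 : a = 1 := by linarith
    simpa [← hb0, ha1] using hu
  have hb' : b = 1 - a := by linarith
  subst hb'
  have ha1 : a < 1 := by linarith
  rw [Metric.mem_closure_iff] at hu hv ⊢
  intro r hr
  obtain ⟨u', hu', hud⟩ := hu (r/4) (by linarith)
  obtain ⟨v', hv', hvd⟩ := hv (r/4) (by linarith)
  have hnu : ‖u'‖ ≤ |R| := le_trans (ratCombos_norm_le hA u' hu') (le_abs_self R)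
  have hnv : ‖v'‖ ≤ |R| := le_trans (ratCombos_norm_le hA v' hv') (le_abs_self R)
  set r' := r / (4 * (|R| + 1)) with hr'
  have habs : (0:ℝ) ≤ |R| := abs_nonneg R
  have hr'pos : 0 < r' := by positivity
  obtain ⟨s, hs1, hs2⟩ := exists_rat_btwn
    (show max (a/2) (a - r') < a from max_lt (by linarith) (by linarith))
  have hs1a : a / 2 < (s:ℝ) := lt_of_le_of_lt (le_max_left _ _) hs1
  have hs1b : a - r' < (s:ℝ) := lt_of_le_of_lt (le_max_right _ _) hs1
  have hs0 : 0 < (s:ℝ) := by linarith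
  have hslt : (s:ℝ) < 1 := by linarith
  refine ⟨(s:ℝ) • u' + (1 - (s:ℝ)) • v',
    ratCombos_smul_add hu' hv' (by exact_mod_cast hs0) (by exact_mod_cast hslt), ?_⟩
  rw [dist_eq_norm]
  have key : a • u + (1-a) • v - ((s:ℝ) • u' + (1 - (s:ℝ)) • v')
      = a • (u - u') + (1-a) • (v - v') + (a - (s:ℝ)) • (u' - v') := by module
  rw [key]
  have e1 : ‖u - u'‖ < r/4 := by rwa [dist_eq_norm] at hud
  have e2 : ‖v - v'‖ < r/4 := by rwa [dist_eq_norm] at hvd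
  have e5 : ‖u' - v'‖ ≤ 2 * |R| := le_trans (norm_sub_le _ _) (by linarith)
  have tri : ‖a • (u - u') + (1-a) • (v - v') + (a - (s:ℝ)) • (u' - v')‖
      ≤ a * ‖u - u'‖ + (1-a) * ‖v - v'‖ + |a - (s:ℝ)| * ‖u' - v'‖ := by
    refine le_trans (norm_add_le _ _) ?_
    have h := norm_add_le (a • (u - u')) ((1-a) • (v - v'))
    rw [norm_smul, norm_smul] at h
    rw [norm_smul]
    simp only [Real.norm_eq_abs] at h ⊢
    rw [abs_of_pos ha, abs_of_pos hb] at h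
    linarith
  have habss : |a - (s:ℝ)| < r' := abs_sub_lt_iff.mpr ⟨by linarith, by linarith⟩
  have hterm : |a - (s:ℝ)| * ‖u' - v'‖ < r / 2 := by
    have h1 : |a - (s:ℝ)| * ‖u' - v'‖ ≤ r' * (2 * |R|) :=
      mul_le_mul habss.le e5 (norm_nonneg _) hr'pos.le
    have h2 : r' * (2 * |R|) < r / 2 := by
      rw [hr', div_mul_eq_mul_div, div_lt_div_iff₀ (by linarith) (by norm_num)]
      nlinarith
    linarith
  have h3 : a * ‖u - u'‖ ≤ ‖u - u'‖ := by nlinarith [norm_nonneg (u - u')]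
  have h4 : (1-a) * ‖v - v'‖ ≤ ‖v - v'‖ := by nlinarith [norm_nonneg (v - v')]
  linarith

lemma closure_convexHull_subset_clCoQ {A : Set X} {R : ℝ} (hA : ∀ a ∈ A, ‖a‖ ≤ R) :
    closure (convexHull ℝ A) ⊆ clCoQ A := by
  refine closure_minimal (convexHull_min ?_ (clCoQ_convex hA)) ?_
  · exact (subset_ratCombos A).trans subset_closure
  · rw [clCoQ_eq]; exact isClosed_closure

lemma daugavet_hull (h : HasDaugavet X) {x : X} {R ε : ℝ} (hR : ‖x‖ = R) (hRpos : 0 < R)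
    (hε : 0 < ε) {w : X} (hw : ‖w‖ ≤ R) :
    w ∈ closure (convexHull ℝ {y : X | ‖y‖ ≤ R ∧ 2 * R - ε < ‖x - y‖}) := by
  set B := {y : X | ‖y‖ ≤ R ∧ 2 * R - ε < ‖x - y‖} with hB
  by_contra hcon
  have hCc : Convex ℝ (closure (convexHull ℝ B)) := (convex_convexHull ℝ B).closure
  obtain ⟨f, c, hfb, hfw⟩ := geometric_hahn_banach_closed_point hCc isClosed_closure hcon
  have hx0 : x ≠ 0 := by
    intro h0; rw [h0, norm_zero] at hR; linarith
  set u : X := R⁻¹ • x with hu'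
  have hu : ‖u‖ = 1 := by
    rw [hu', norm_smul, Real.norm_eq_abs, abs_of_pos (inv_pos.mpr hRpos), hR,
      inv_mul_cancel₀ hRpos.ne']
  have hxu : R • u = x := by
    rw [hu', smul_smul, mul_inv_cancel₀ hRpos.ne', one_smul]
  have hmem : ∀ S : Set X, IsSlice S → ∃ y ∈ S, R • y ∈ B := by
    intro S hS
    obtain ⟨y, hyS, hxy⟩ := h (ε / R) (div_pos hε hRpos) u hu S hS
    obtain ⟨g, α, hg, hα, rfl⟩ := hS
    refine ⟨y, hyS, ?_, ?_⟩
    · rw [norm_smul, Real.norm_eq_abs, abs_of_pos hRpos]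
      calc R * ‖y‖ ≤ R * 1 := mul_le_mul_of_nonneg_left hyS.1 hRpos.le
        _ = R := mul_one R
    · have hsc : ‖x - R • y‖ = R * ‖u - y‖ := by
        rw [← hxu, ← smul_sub, norm_smul, Real.norm_eq_abs, abs_of_pos hRpos]
      rw [hsc]
      calc 2 * R - ε = R * (2 - ε / R) := by field_simp
        _ < R * ‖u - y‖ := mul_lt_mul_of_pos_left hxy hRpos
  obtain ⟨g0, hg0, hg0x⟩ := exists_dual_vector ℝ x (norm_ne_zero_iff.mpr hx0)
  obtain ⟨y00, _, hy0B⟩ := hmem {v : X | ‖v‖ ≤ 1 ∧ 1 - 1 < g0 v} ⟨g0, 1, hg0, one_pos, rfl⟩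
  have hfy0 : f (R • y00) < c := hfb _ (subset_closure (subset_convexHull ℝ B hy0B))
  have hf0 : f ≠ 0 := by
    intro h0
    rw [h0] at hfy0 hfw
    simp at hfy0 hfw
    linarith
  have hfn : 0 < ‖f‖ := norm_pos_iff.mpr hf0
  have hcR : c < ‖f‖ * R := by
    have h1 : f w ≤ ‖f‖ * ‖w‖ := le_trans (le_abs_self _) (f.le_opNorm w)
    have h2 : ‖f‖ * ‖w‖ ≤ ‖f‖ * R := mul_le_mul_of_nonneg_left hw hfn.le
    linarith
  set g : X →L[ℝ] ℝ := ‖f‖⁻¹ • f with hg'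
  have hg : ‖g‖ = 1 := by
    rw [hg', norm_smul (‖f‖⁻¹) f, Real.norm_eq_abs, abs_of_pos (inv_pos.mpr hfn),
      inv_mul_cancel₀ hfn.ne']
  set α : ℝ := 1 - c / (‖f‖ * R) with hα'
  have hα : 0 < α := by
    rw [hα', sub_pos, div_lt_one (by positivity)]
    exact hcR
  obtain ⟨y, hyS, hyB⟩ := hmem {v : X | ‖v‖ ≤ 1 ∧ 1 - α < g v} ⟨g, α, hg, hα, rfl⟩
  have h1 : f (R • y) < c := hfb _ (subset_closure (subset_convexHull ℝ B hyB))
  have h2 : c / (‖f‖ * R) < ‖f‖⁻¹ * f y := by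
    have hy2 := hyS.2
    rw [hα'] at hy2
    simpa [hg'] using hy2
  have h3 : f (R • y) = R * f y := by rw [map_smul, smul_eq_mul]
  have h4 : c < R * f y := by
    have hpos : 0 < ‖f‖ * R := by positivity
    have h5 := (div_lt_iff₀ hpos).mp h2
    calc c < ‖f‖⁻¹ * f y * (‖f‖ * R) := h5
      _ = R * f y := by field_simp
  rw [h3] at h1
  linarith

end daugavetAux

set_option maxHeartbeats 1000000 in
theorem stmt2 (X : Type) [NormedAddCommGroup X] [NormedSpace ℝ X] [CompleteSpace X]
    (D : Set X) (hD : Dense D) :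
    HasDaugavet X ↔
      ∀ ε > (0 : ℝ), ∀ x ∈ D, ∀ z ∈ D, ‖x‖ ≤ ‖z‖ ∨
        z ∈ clCoQ {y : X | y ∈ D ∧ ‖y‖ < ‖x‖ ∧ 2 * ‖x‖ - ε < ‖x - y‖} := by
  constructor
  · -- Daugavet ⇒ combination property
    intro hDau ε hε x hx z hz
    by_cases hle : ‖x‖ ≤ ‖z‖
    · exact Or.inl hle
    right
    push_neg at hle
    have hR : 0 < ‖x‖ := lt_of_le_of_lt (norm_nonneg z) hle
    set A := {y : X | y ∈ D ∧ ‖y‖ < ‖x‖ ∧ 2 * ‖x‖ - ε < ‖x - y‖} with hA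
    set B := {y : X | ‖y‖ ≤ ‖x‖ ∧ 2 * ‖x‖ - ε/2 < ‖x - y‖} with hB
    have hBA : B ⊆ closure A := by
      intro y hy
      rw [Metric.mem_closure_iff]
      intro r hr
      set δ := min (ε/(8*‖x‖)) (min (r/(4*‖x‖)) (1/2)) with hδ
      have hδ0 : 0 < δ := lt_min (by positivity) (lt_min (by positivity) (by norm_num))
      have hδ1 : δ ≤ 1/2 := le_trans (min_le_right _ _) (min_le_right _ _)
      have hxne : ‖x‖ ≠ 0 := hR.ne'
      have hδε : δ * ‖x‖ ≤ ε/8 := by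
        have h1 : δ ≤ ε/(8*‖x‖) := min_le_left _ _
        calc δ * ‖x‖ ≤ ε/(8*‖x‖) * ‖x‖ := mul_le_mul_of_nonneg_right h1 (norm_nonneg x)
          _ = ε/8 := by field_simp
      have hδr : δ * ‖x‖ ≤ r/4 := by
        have h1 : δ ≤ r/(4*‖x‖) := le_trans (min_le_right _ _) (min_le_left _ _)
        calc δ * ‖x‖ ≤ r/(4*‖x‖) * ‖x‖ := mul_le_mul_of_nonneg_right h1 (norm_nonneg x)
          _ = r/4 := by field_simp
      obtain ⟨d, hdD, hdd⟩ := hD.exists_dist_lt ((1-δ) • y) (show 0 < δ * ‖x‖ by positivity)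
      have hdd' : ‖(1-δ) • y - d‖ < δ * ‖x‖ := by rwa [dist_eq_norm] at hdd
      have hn1 : ‖(1-δ) • y‖ = (1-δ) * ‖y‖ := by
        rw [norm_smul, Real.norm_eq_abs, abs_of_nonneg (by linarith)]
      have hyb : (1-δ) * ‖y‖ ≤ (1-δ) * ‖x‖ := mul_le_mul_of_nonneg_left hy.1 (by linarith)
      refine ⟨d, ⟨hdD, ?_, ?_⟩, ?_⟩
      · -- ‖d‖ < ‖x‖
        have t1 : ‖d‖ ≤ ‖(1-δ) • y‖ + ‖d - (1-δ) • y‖ := by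
          have := norm_add_le ((1-δ) • y) (d - (1-δ) • y)
          simpa using this
        rw [norm_sub_rev] at t1
        rw [hn1] at t1
        have : ‖d‖ < (1-δ) * ‖x‖ + δ * ‖x‖ := by linarith
        calc ‖d‖ < (1-δ) * ‖x‖ + δ * ‖x‖ := this
          _ = ‖x‖ := by ring
      · -- 2‖x‖ - ε < ‖x - d‖
        have t1 : ‖x - y‖ ≤ ‖x - d‖ + ‖d - (1-δ) • y‖ + ‖(1-δ) • y - y‖ := by
          calc ‖x - y‖ = ‖(x - d) + (d - (1-δ) • y) + ((1-δ) • y - y)‖ := by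
                congr 1; abel
            _ ≤ _ := norm_add₃_le
        have t2 : ‖(1-δ) • y - y‖ = δ * ‖y‖ := by
          have e : (1-δ) • y - y = (-δ) • y := by module
          rw [e, norm_smul, Real.norm_eq_abs, abs_of_nonpos (by linarith), neg_neg]
        have t3 : δ * ‖y‖ ≤ δ * ‖x‖ := mul_le_mul_of_nonneg_left hy.1 hδ0.le
        have hdd2 : ‖d - (1-δ) • y‖ < δ * ‖x‖ := by rwa [norm_sub_rev] at hdd'
        have hxy := hy.2
        -- ‖x - d‖ ≥ ‖x-y‖ - 2δ‖x‖ > 2‖x‖ - ε/2 - ε/4 > 2‖x‖ - ε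
        have : 2*‖x‖ - ε/2 - 2*(δ*‖x‖) < ‖x - d‖ := by
          rw [t2] at t1
          linarith [hdd2]
        linarith
      · -- dist y d < r
        have t1 : dist y d ≤ dist y ((1-δ) • y) + dist ((1-δ) • y) d := dist_triangle _ _ _
        have t2 : dist y ((1-δ) • y) = δ * ‖y‖ := by
          rw [dist_eq_norm]
          have e : y - (1-δ) • y = δ • y := by module
          rw [e, norm_smul, Real.norm_eq_abs, abs_of_pos hδ0]
        have t3 : δ * ‖y‖ ≤ δ * ‖x‖ := mul_le_mul_of_nonneg_left hy.1 hδ0.le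
        rw [t2] at t1
        have : dist y d < 2 * (δ * ‖x‖) := by linarith
        linarith
    have hzB : z ∈ closure (convexHull ℝ B) :=
      daugavet_hull hDau rfl hR (half_pos hε) hle.le
    have hsub : closure (convexHull ℝ B) ⊆ closure (convexHull ℝ A) := by
      have h1 : convexHull ℝ B ⊆ closure (convexHull ℝ A) :=
        convexHull_min (hBA.trans (closure_mono (subset_convexHull ℝ A)))
          ((convex_convexHull ℝ A).closure)
      calc closure (convexHull ℝ B) ⊆ closure (closure (convexHull ℝ A)) := closure_mono h1
        _ = closure (convexHull ℝ A) := closure_closure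
    exact closure_convexHull_subset_clCoQ (fun a ha => ha.2.1.le) (hsub hzB)
  · -- combination property ⇒ Daugavet
    intro hyp ε hε x hxn S hS
    obtain ⟨f, α, hf, hα, rfl⟩ := hS
    set ε₀ := min ε 1 with hε₀
    have hε₀0 : 0 < ε₀ := lt_min hε one_pos
    have hε₀1 : ε₀ ≤ 1 := min_le_right _ _
    have hε₀ε : ε₀ ≤ ε := min_le_left _ _
    set β := min α 1 with hβ
    have hβ0 : 0 < β := lt_min hα one_pos
    have hβα : β ≤ α := min_le_left _ _
    set δ := min ε₀ β / 32 with hδdef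
    have hδ0 : 0 < δ := by
      rw [hδdef]; have := lt_min hε₀0 hβ0; positivity
    have hδε : δ ≤ ε₀/32 := by
      rw [hδdef]; have := min_le_left ε₀ β; linarith
    have hδβ : δ ≤ β/32 := by
      rw [hδdef]; have := min_le_right ε₀ β; linarith
    have hδ1 : δ ≤ 1/32 := le_trans hδε (by linarith)
    obtain ⟨w0, hw0n, hw0f⟩ := f.exists_lt_apply_of_lt_opNorm
      (show 1 - β/4 < ‖f‖ by rw [hf]; linarith)
    obtain ⟨z₀, hz₀n, hz₀f⟩ : ∃ z₀ : X, ‖z₀‖ ≤ 1 ∧ 1 - β/4 < f z₀ := by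
      rcases le_or_gt 0 (f w0) with h | h
      · exact ⟨w0, hw0n.le, by rwa [Real.norm_eq_abs, abs_of_nonneg h] at hw0f⟩
      · refine ⟨-w0, by simpa using hw0n.le, ?_⟩
        rw [map_neg]
        rwa [Real.norm_eq_abs, abs_of_neg h] at hw0f
    obtain ⟨x', hx'D, hx'd⟩ := hD.exists_dist_lt ((1-δ) • x) (show (0:ℝ) < δ^2 by positivity)
    have hnx1 : ‖(1-δ) • x‖ = 1 - δ := by
      rw [norm_smul, Real.norm_eq_abs, abs_of_nonneg (by linarith), hxn, mul_one]
    have hx'ub : ‖x'‖ < 1 - δ + δ^2 := by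
      have t := norm_add_le ((1-δ) • x) (x' - (1-δ) • x)
      simp only [add_sub_cancel] at t
      have t2 : ‖x' - (1-δ) • x‖ < δ^2 := by
        rw [← dist_eq_norm, dist_comm]; exact hx'd
      rw [hnx1] at t
      linarith
    have hx'lb : 1 - δ - δ^2 < ‖x'‖ := by
      have t := norm_add_le x' ((1-δ) • x - x')
      simp only [add_sub_cancel] at t
      have t2 : ‖(1-δ) • x - x'‖ < δ^2 := by rw [← dist_eq_norm]; exact hx'd
      rw [hnx1] at t
      linarith
    have hδδ : δ^2 ≤ δ := by nlinarith
    set z₁ := (1 - 2*δ) • z₀ with hz₁def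
    have hz₁n : ‖z₁‖ ≤ 1 - 2*δ := by
      rw [hz₁def, norm_smul, Real.norm_eq_abs, abs_of_nonneg (by linarith)]
      nlinarith [norm_nonneg z₀]
    have hgap : 0 < ‖x'‖ - (1 - 2*δ) := by nlinarith
    set δ' := min (‖x'‖ - (1 - 2*δ)) (β/16) with hδ'def
    have hδ'0 : 0 < δ' := lt_min hgap (by positivity)
    have hδ'β : δ' ≤ β/16 := min_le_right _ _
    obtain ⟨z', hz'D, hz'd⟩ := hD.exists_dist_lt z₁ hδ'0
    have hz'd' : ‖z' - z₁‖ < δ' := by rw [← dist_eq_norm, dist_comm]; exact hz'd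
    have hz'n : ‖z'‖ < ‖x'‖ := by
      have t := norm_add_le z₁ (z' - z₁)
      simp only [add_sub_cancel] at t
      have : δ' ≤ ‖x'‖ - (1 - 2*δ) := min_le_left _ _
      linarith
    have hfz₀le : f z₀ ≤ 1 := by
      have := le_trans (le_abs_self _) (f.le_opNorm z₀)
      rw [hf, one_mul] at this
      linarith
    have hfz₁ : 1 - 2*δ - β/4 < f z₁ := by
      have h30 : (0:ℝ) ≤ 1 - 2*δ := by linarith
      have key : (1-2*δ) * (1 - β/4) ≤ (1-2*δ) * f z₀ :=
        mul_le_mul_of_nonneg_left hz₀f.le h30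
      have hpos : 0 < δ * β := mul_pos hδ0 hβ0
      have hexp : 1 - 2*δ - β/4 < (1-2*δ) * (1 - β/4) := by nlinarith
      have : f z₁ = (1-2*δ) * f z₀ := by rw [hz₁def, map_smul, smul_eq_mul]
      linarith
    have hfz' : 1 - 2*δ - β/4 - δ' < f z' := by
      have t : |f z' - f z₁| ≤ ‖z' - z₁‖ := by
        have h := f.le_opNorm (z' - z₁)
        rw [hf, one_mul, map_sub, Real.norm_eq_abs] at h
        exact h
      have t2 : f z₁ - f z' ≤ |f z' - f z₁| := by
        rw [abs_sub_comm]; exact le_abs_self _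
      linarith
    rcases hyp (ε₀/4) (by positivity) x' hx'D z' hz'D with hcase | hmem
    · exact absurd hcase (not_le.mpr hz'n)
    rw [clCoQ_eq, Metric.mem_closure_iff] at hmem
    obtain ⟨w, hwM, hwd⟩ := hmem (β/16) (by positivity)
    obtain ⟨n, q, y, hq, hqs, hyA, rfl⟩ := hwM
    have hqs' : ∑ i, (q i:ℝ) = 1 := by exact_mod_cast hqs
    have hfw : 1 - 2*δ - β/4 - δ' - β/16 < f (∑ i, (q i:ℝ) • y i) := by
      have t : |f z' - f (∑ i, (q i:ℝ) • y i)| ≤ ‖z' - ∑ i, (q i:ℝ) • y i‖ := by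
        have h := f.le_opNorm (z' - ∑ i, (q i:ℝ) • y i)
        rw [hf, one_mul, map_sub, Real.norm_eq_abs] at h
        exact h
      have t2 : ‖z' - ∑ i, (q i:ℝ) • y i‖ < β/16 := by rwa [dist_eq_norm] at hwd
      have t3 : f z' - f (∑ i, (q i:ℝ) • y i) ≤ |f z' - f (∑ i, (q i:ℝ) • y i)| :=
        le_abs_self _
      linarith
    have hfse : f (∑ i, (q i:ℝ) • y i) = ∑ i, (q i:ℝ) * f (y i) := by
      rw [map_sum]
      exact Finset.sum_congr rfl fun i _ => by rw [map_smul, smul_eq_mul]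
    have hex : ∃ i, 1 - α < f (y i) := by
      by_contra hno
      push_neg at hno
      have hub : f (∑ i, (q i:ℝ) • y i) ≤ 1 - α := by
        rw [hfse]
        calc ∑ i, (q i:ℝ) * f (y i) ≤ ∑ i, (q i:ℝ) * (1 - α) :=
              Finset.sum_le_sum fun i _ =>
                mul_le_mul_of_nonneg_left (hno i) (le_of_lt (by exact_mod_cast hq i))
          _ = 1 - α := by rw [← Finset.sum_mul, hqs', one_mul]
      linarith
    obtain ⟨i, hfyi⟩ := hex
    obtain ⟨hyD, hyn, hyx'⟩ := hyA i
    refine ⟨y i, ⟨?_, hfyi⟩, ?_⟩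
    · -- ‖y i‖ ≤ 1
      have : ‖y i‖ < 1 - δ + δ^2 := lt_trans hyn hx'ub
      linarith
    · -- 2 - ε < ‖x - y i‖
      have t1 : ‖x' - y i‖ ≤ ‖x' - x‖ + ‖x - y i‖ := by
        calc ‖x' - y i‖ = ‖(x' - x) + (x - y i)‖ := by congr 1; abel
          _ ≤ _ := norm_add_le _ _
      have t2 : ‖x' - x‖ < δ + δ^2 := by
        calc ‖x' - x‖ ≤ ‖x' - (1-δ) • x‖ + ‖(1-δ) • x - x‖ := by
              calc ‖x' - x‖ = ‖(x' - (1-δ) • x) + ((1-δ) • x - x)‖ := by congr 1; abel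
                _ ≤ _ := norm_add_le _ _
          _ < δ^2 + δ := by
              have e1 : ‖x' - (1-δ) • x‖ < δ^2 := by
                rw [← dist_eq_norm, dist_comm]; exact hx'd
              have e2 : ‖(1-δ) • x - x‖ = δ := by
                have e : (1-δ) • x - x = (-δ) • x := by module
                rw [e, norm_smul, Real.norm_eq_abs, abs_of_nonpos (by linarith), neg_neg,
                  hxn, mul_one]
              linarith
          _ = δ + δ^2 := by ring
      -- hyx' : 2 * ‖x'‖ - ε₀/4 < ‖x' - y i‖
      have t3 : 2 - ε < ‖x - y i‖ := by nlinarith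
      exact t3
end

section
/- Let X be a real Banach space and D ⊆ X a dense subset. Then the following are equivalent: (1) X has the DLD2P; (2) for every ε > 0 and every nonzero x ∈ D, x belongs to cl co_ℚ({ y ∈ D : ‖y‖ < ‖x‖ and ‖x − y‖ > 2‖x‖ − ε }). -/
open scoped BigOperators Topology

namespace Stmt3Aux

set_option linter.unusedSectionVars false

section
variable {X : Type*} [NormedAddCommGroup X] [NormedSpace ℝ X]

def ratSet (A : Set X) : Set X :=
  {z : X | ∃ (n : ℕ) (q : Fin n → ℚ) (y : Fin n → X),
    (∀ i, 0 < q i) ∧ (∑ i, q i = 1) ∧ (∀ i, y i ∈ A) ∧ z = ∑ i, (q i : ℝ) • y i}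

lemma clCoQ_eq (A : Set X) : clCoQ A = closure (ratSet A) := rfl

lemma mem_ratSet_self {A : Set X} {a : X} (ha : a ∈ A) : a ∈ ratSet A :=
  ⟨1, fun _ => 1, fun _ => a, fun _ => one_pos, by simp, fun _ => ha, by simp⟩

lemma ratSet_combo {A : Set X} {z1 z2 : X} (h1 : z1 ∈ ratSet A) (h2 : z2 ∈ ratSet A)
    {p : ℚ} (hp0 : 0 < p) (hp1 : p < 1) :
    (p : ℝ) • z1 + ((1 : ℝ) - (p : ℝ)) • z2 ∈ ratSet A := by
  obtain ⟨n, q, y, hq, hqs, hy, rfl⟩ := h1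
  obtain ⟨m, r, w, hr, hrs, hw, rfl⟩ := h2
  refine ⟨n + m, Fin.append (fun i => p * q i) (fun j => (1 - p) * r j),
    Fin.append y w, ?_, ?_, ?_, ?_⟩
  · intro i
    refine Fin.addCases (fun i => ?_) (fun j => ?_) i
    · rw [Fin.append_left]; exact mul_pos hp0 (hq i)
    · rw [Fin.append_right]; exact mul_pos (by linarith) (hr j)
  · rw [Fin.sum_univ_add]
    simp only [Fin.append_left, Fin.append_right, ← Finset.mul_sum, hqs, hrs]
    ring
  · intro i
    refine Fin.addCases (fun i => ?_) (fun j => ?_) i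
    · rw [Fin.append_left]; exact hy i
    · rw [Fin.append_right]; exact hw j
  · rw [Fin.sum_univ_add]
    simp only [Fin.append_left, Fin.append_right]
    rw [Finset.smul_sum, Finset.smul_sum]
    congr 1 <;> refine Finset.sum_congr rfl fun i _ => ?_ <;> push_cast <;>
      rw [mul_smul]


lemma convex_closure_ratSet (A : Set X) : Convex ℝ (closure (ratSet A)) := by
  intro a ha b hb la lb hla hlb hsum
  rcases eq_or_lt_of_le hla with h0 | hla'
  · have h1 : lb = 1 := by linarith
    rw [← h0, h1]; simpa using hb
  rcases eq_or_lt_of_le hlb with h0 | hlb'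
  · have h1 : la = 1 := by linarith
    rw [← h0, h1]; simpa using ha
  have hla1 : la < 1 := by linarith
  rw [Metric.mem_closure_iff]
  intro δ hδ
  obtain ⟨a', ha', hda⟩ := Metric.mem_closure_iff.mp ha (δ/3) (by linarith)
  obtain ⟨b', hb', hdb⟩ := Metric.mem_closure_iff.mp hb (δ/3) (by linarith)
  have hM : (0:ℝ) < ‖a - b‖ + 1 := by positivity
  set η := min la (δ/(3*(‖a - b‖+1))) with hη
  have hη0 : 0 < η := lt_min hla' (by positivity)
  obtain ⟨p, hp1, hp2⟩ := exists_rat_btwn (show la - η < la by linarith)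
  have hp0 : (0:ℝ) < (p:ℝ) := by
    have hle : η ≤ la := min_le_left _ _
    linarith
  have hplt : (p:ℝ) < 1 := lt_trans hp2 hla1
  refine ⟨(p:ℝ) • a' + ((1:ℝ) - (p:ℝ)) • b', ratSet_combo ha' hb'
    (by exact_mod_cast hp0) (by exact_mod_cast hplt), ?_⟩
  have hkey : la • a + lb • b - ((p:ℝ) • a' + ((1:ℝ) - (p:ℝ)) • b')
      = (p:ℝ) • (a - a') + ((1:ℝ) - (p:ℝ)) • (b - b') + (la - (p:ℝ)) • (a - b) := by
    have h1 : lb = 1 - la := by linarith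
    rw [h1]; module
  rw [dist_eq_norm, hkey]
  have e1 : ‖(p:ℝ) • (a - a')‖ = (p:ℝ) * ‖a - a'‖ := by
    rw [norm_smul, Real.norm_eq_abs, abs_of_pos hp0]
  have e2 : ‖((1:ℝ) - (p:ℝ)) • (b - b')‖ = (1 - (p:ℝ)) * ‖b - b'‖ := by
    rw [norm_smul, Real.norm_eq_abs, abs_of_pos (by linarith)]
  have e3 : ‖(la - (p:ℝ)) • (a - b)‖ = (la - (p:ℝ)) * ‖a - b‖ := by
    rw [norm_smul, Real.norm_eq_abs, abs_of_pos (by linarith)]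
  have hd1 : ‖a - a'‖ < δ/3 := by rwa [dist_eq_norm] at hda
  have hd2 : ‖b - b'‖ < δ/3 := by rwa [dist_eq_norm] at hdb
  have hlap : la - (p:ℝ) < δ/(3*(‖a - b‖+1)) := by
    have : η ≤ δ/(3*(‖a - b‖+1)) := min_le_right _ _
    linarith
  have hterm3 : (la - (p:ℝ)) * ‖a - b‖ < δ/3 := by
    calc (la - (p:ℝ)) * ‖a - b‖ ≤ (la - (p:ℝ)) * (‖a - b‖ + 1) := by nlinarith
    _ < (δ/(3*(‖a - b‖+1))) * (‖a - b‖ + 1) := by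
        apply mul_lt_mul_of_pos_right hlap hM
    _ = δ/3 := by field_simp
  calc ‖(p:ℝ) • (a - a') + ((1:ℝ) - (p:ℝ)) • (b - b') + (la - (p:ℝ)) • (a - b)‖
      ≤ ‖(p:ℝ) • (a - a') + ((1:ℝ) - (p:ℝ)) • (b - b')‖ + ‖(la - (p:ℝ)) • (a - b)‖ :=
        norm_add_le _ _
    _ ≤ ‖(p:ℝ) • (a - a')‖ + ‖((1:ℝ) - (p:ℝ)) • (b - b')‖ + ‖(la - (p:ℝ)) • (a - b)‖ := by
        linarith [norm_add_le ((p:ℝ) • (a - a')) (((1:ℝ) - (p:ℝ)) • (b - b'))]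
    _ < δ := by rw [e1, e2, e3]; nlinarith


lemma exists_big {n : ℕ} (q : Fin n → ℚ) (v : Fin n → ℝ) (hq : ∀ i, 0 < q i)
    (hqs : ∑ i, q i = 1) {c : ℝ} (hc : c ≤ ∑ i, (q i : ℝ) * v i) : ∃ i, c ≤ v i := by
  have hn : Nonempty (Fin n) := by
    rcases Nat.eq_zero_or_pos n with h | h
    · subst h; simp at hqs
    · exact ⟨⟨0, h⟩⟩
  by_contra hcon
  push_neg at hcon
  have hlt : ∑ i, (q i : ℝ) * v i < ∑ i, (q i : ℝ) * c := by
    apply Finset.sum_lt_sum_of_nonempty Finset.univ_nonempty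
    intro i _
    exact mul_lt_mul_of_pos_left (hcon i) (by exact_mod_cast hq i)
  have hs : (∑ i, (q i : ℝ)) = 1 := by exact_mod_cast hqs
  rw [← Finset.sum_mul, hs, one_mul] at hlt
  linarith

lemma dense_near {D : Set X} (hD : Dense D) (z : X) {δ : ℝ} (hδ : 0 < δ) :
    ∃ d ∈ D, ‖z - d‖ < δ := by
  obtain ⟨d, hdd, hd⟩ := Metric.mem_closure_iff.mp (hD z) δ hδ
  exact ⟨d, hdd, by rwa [dist_eq_norm] at hd⟩

end

set_option maxHeartbeats 1000000 in
theorem forward (X : Type) [NormedAddCommGroup X] [NormedSpace ℝ X]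
    (D : Set X) (hD : Dense D) (hX : HasDLD2P X) :
    ∀ ε > (0 : ℝ), ∀ x ∈ D, x ≠ 0 →
      x ∈ closure (ratSet {y : X | y ∈ D ∧ ‖y‖ < ‖x‖ ∧ 2 * ‖x‖ - ε < ‖x - y‖}) := by
  intro ε hε x hxD hx0
  set A := {y : X | y ∈ D ∧ ‖y‖ < ‖x‖ ∧ 2 * ‖x‖ - ε < ‖x - y‖} with hAdef
  have hnx : (0:ℝ) < ‖x‖ := norm_pos_iff.mpr hx0
  -- A is nonempty
  have hAne : A.Nonempty := by
    set t : ℝ := min (ε/(2*‖x‖)) (1/2) with ht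
    have ht0 : 0 < t := lt_min (by positivity) (by norm_num)
    have ht2 : t ≤ 1/2 := min_le_right _ _
    have htx : t*‖x‖ ≤ ε/2 := by
      calc t*‖x‖ ≤ (ε/(2*‖x‖))*‖x‖ :=
            mul_le_mul_of_nonneg_right (min_le_left _ _) (norm_nonneg _)
        _ = ε/2 := by field_simp
    obtain ⟨d, hdD, hdd⟩ := dense_near hD ((-(1-t)) • x) (show (0:ℝ) < t*‖x‖/2 by positivity)
    refine ⟨d, hdD, ?_, ?_⟩
    · have h1 : ‖(-(1-t)) • x‖ = (1-t)*‖x‖ := by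
        rw [norm_smul, Real.norm_eq_abs, abs_of_neg (by linarith)]; ring
      have h2 : ‖d‖ ≤ ‖(-(1-t)) • x‖ + ‖d - (-(1-t)) • x‖ := by
        have := norm_add_le ((-(1-t)) • x) (d - (-(1-t)) • x)
        simpa using this
      have h3 : ‖d - (-(1-t)) • x‖ = ‖(-(1-t)) • x - d‖ := norm_sub_rev _ _
      rw [h3, h1] at h2
      have hp : 0 < t*‖x‖ := by positivity
      linarith
    · have h1 : x - (-(1-t)) • x = (2-t) • x := by module
      have h2 : ‖x - (-(1-t)) • x‖ = (2-t)*‖x‖ := by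
        rw [h1, norm_smul, Real.norm_eq_abs, abs_of_pos (by linarith)]
      have h3 : ‖x - (-(1-t)) • x‖ ≤ ‖x - d‖ + ‖d - (-(1-t)) • x‖ := by
        have := norm_add_le (x - d) (d - (-(1-t)) • x)
        simpa using this
      rw [norm_sub_rev d _] at h3
      rw [h2] at h3
      have hp : 0 < t*‖x‖ := by positivity
      linarith
  -- separation
  by_contra hmem
  obtain ⟨f, u, hfA, hfx⟩ := geometric_hahn_banach_closed_point
    (convex_closure_ratSet A) isClosed_closure hmem
  have hAsub : ∀ a ∈ A, a ∈ closure (ratSet A) := fun a ha =>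
    subset_closure (mem_ratSet_self ha)
  have hf0 : f ≠ 0 := by
    rintro rfl
    obtain ⟨a, ha⟩ := hAne
    have h1 := hfA a (hAsub a ha)
    simp at h1 hfx
    linarith
  have hnf : (0:ℝ) < ‖f‖ := norm_pos_iff.mpr hf0
  set g : X →L[ℝ] ℝ := ‖f‖⁻¹ • f with hgdef
  have hgnorm : ‖g‖ = 1 := norm_smul_inv_norm hf0
  have hgapp : ∀ z : X, g z = f z / ‖f‖ := by
    intro z
    rw [hgdef]
    simp [ContinuousLinearMap.smul_apply, div_eq_inv_mul]
  clear_value g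
  set s : ℝ := u / ‖f‖ with hsdef
  have hgA : ∀ a ∈ A, g a < s := by
    intro a ha
    rw [hgapp, hsdef]
    exact div_lt_div_of_pos_right (hfA a (hAsub a ha)) hnf
  have hgx : s < g x := by
    rw [hgapp, hsdef]
    exact div_lt_div_of_pos_right hfx hnf
  clear_value s
  -- the slice
  set u0 : X := ‖x‖⁻¹ • x with hu0def
  have hu0 : ‖u0‖ = 1 := norm_smul_inv_norm hx0
  have hgu0 : g u0 = g x / ‖x‖ := by
    rw [hu0def, map_smul, smul_eq_mul, div_eq_inv_mul]
  have hgu0le : g u0 ≤ 1 := by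
    calc g u0 ≤ ‖g u0‖ := le_abs_self _
      _ ≤ ‖g‖ * ‖u0‖ := g.le_opNorm u0
      _ = 1 := by rw [hgnorm, hu0, one_mul]
  clear_value u0
  set β : ℝ := s / ‖x‖ with hβdef
  have hβlt : β < g u0 := by
    rw [hβdef, hgu0]
    exact div_lt_div_of_pos_right hgx hnx
  have hsβ : s = ‖x‖ * β := by rw [hβdef]; field_simp
  clear_value β
  set β' : ℝ := (β + g u0)/2 with hβ'def
  have hββ' : β < β' := by rw [hβ'def]; linarith
  have hβ'lt : β' < g u0 := by rw [hβ'def]; linarith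
  have hβ'1 : β' < 1 := lt_of_lt_of_le hβ'lt hgu0le
  clear_value β'
  set α : ℝ := 1 - β' with hαdef
  have hα : 0 < α := by rw [hαdef]; linarith
  clear_value α
  have hslice : IsSlice {y : X | ‖y‖ ≤ 1 ∧ 1 - α < g y} := ⟨g, α, hgnorm, hα, rfl⟩
  have hu0mem : u0 ∈ {y : X | ‖y‖ ≤ 1 ∧ 1 - α < g y} := by
    refine ⟨le_of_eq hu0, ?_⟩
    rw [hαdef]
    simpa using hβ'lt
  have hε' : (0:ℝ) < ε/(2*‖x‖) := by positivity
  obtain ⟨y, ⟨hy1, hy2⟩, hyd⟩ := hX (ε/(2*‖x‖)) hε' _ hslice u0 hu0mem hu0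
  rw [hαdef] at hy2
  have hy2' : β' < g y := by simpa using hy2
  -- build the contradiction point
  set z0 : X := ‖x‖ • y with hz0def
  have hgz0eq : g z0 = ‖x‖ * g y := by rw [hz0def, map_smul, smul_eq_mul]
  clear_value z0
  set m : ℝ := ‖x‖ * β' - s with hmdef
  clear_value m
  have hm : 0 < m := by
    rw [hmdef, hsβ]
    have := mul_lt_mul_of_pos_left hββ' hnx
    linarith
  have hgz0 : s + m < g z0 := by
    rw [hmdef, hgz0eq]
    have := mul_lt_mul_of_pos_left hy2' hnx
    linarith
  have hz0n : ‖z0‖ ≤ ‖x‖ := by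
    rw [hz0def, norm_smul, Real.norm_eq_abs, abs_of_pos hnx]
    exact mul_le_of_le_one_right hnx.le hy1
  have hxz0 : 2*‖x‖ - ε/2 < ‖x - z0‖ := by
    have h1 : x - z0 = ‖x‖ • (u0 - y) := by
      rw [hz0def, hu0def, smul_sub, smul_inv_smul₀ (ne_of_gt hnx)]
    rw [h1, norm_smul, Real.norm_eq_abs, abs_of_pos hnx]
    have h2 : 2 - ε/(2*‖x‖) < ‖u0 - y‖ := hyd
    have h3 : ‖x‖ * (2 - ε/(2*‖x‖)) = 2*‖x‖ - ε/2 := by field_simp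
    have h4 := mul_lt_mul_of_pos_left h2 hnx
    linarith
  set r : ℝ := min (ε/2) m with hrdef
  have hr0 : 0 < r := lt_min (by linarith) hm
  have hr1 : r ≤ ε/2 := min_le_left _ _
  have hr2 : r ≤ m := min_le_right _ _
  clear_value r
  set t : ℝ := min (r/(4*(‖x‖+1))) (1/2) with htdef
  have ht0 : 0 < t := lt_min (by positivity) (by norm_num)
  have ht2 : t ≤ 1/2 := min_le_right _ _
  have htx : t*‖x‖ ≤ r/4 := by
    have h1 : t ≤ r/(4*(‖x‖+1)) := min_le_left _ _
    have h2 : t*‖x‖ ≤ (r/(4*(‖x‖+1)))*(‖x‖+1) :=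
      mul_le_mul h1 (by linarith [norm_nonneg x]) (norm_nonneg x)
        (div_nonneg hr0.le (by positivity))
    have h3 : (r/(4*(‖x‖+1)))*(‖x‖+1) = r/4 := by
      field_simp
    linarith
  clear_value t
  set δ : ℝ := t*‖x‖/2 with hδdef
  have hδ0 : 0 < δ := by positivity
  clear_value δ
  obtain ⟨d, hdD, hdd⟩ := dense_near hD ((1-t) • z0) hδ0
  -- d ∈ A
  have hdz0 : ‖z0 - d‖ ≤ t*‖x‖ + δ := by
    have h1 : z0 - d = (z0 - (1-t) • z0) + ((1-t) • z0 - d) := by abel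
    have h2 : z0 - (1-t) • z0 = t • z0 := by module
    have h3 : ‖t • z0‖ ≤ t * ‖x‖ := by
      rw [norm_smul, Real.norm_eq_abs, abs_of_pos ht0]
      exact mul_le_mul_of_nonneg_left hz0n ht0.le
    calc ‖z0 - d‖ ≤ ‖z0 - (1-t) • z0‖ + ‖(1-t) • z0 - d‖ := by rw [h1]; exact norm_add_le _ _
      _ ≤ t*‖x‖ + δ := by rw [h2]; exact add_le_add h3 (le_of_lt hdd)
  have hdA : d ∈ A := by
    refine ⟨hdD, ?_, ?_⟩
    · have h1 : ‖(1-t) • z0‖ ≤ (1-t) * ‖x‖ := by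
        rw [norm_smul, Real.norm_eq_abs, abs_of_pos (by linarith)]
        exact mul_le_mul_of_nonneg_left hz0n (by linarith)
      have h2 : ‖d‖ ≤ ‖(1-t) • z0‖ + ‖d - (1-t) • z0‖ := by
        have := norm_add_le ((1-t) • z0) (d - (1-t) • z0)
        simpa using this
      rw [norm_sub_rev] at h2
      have hp : 0 < t*‖x‖ := by positivity
      linarith
    · have h1 : ‖x - z0‖ ≤ ‖x - d‖ + ‖d - z0‖ := by
        have := norm_add_le (x - d) (d - z0)
        simpa using this
      have h2 : ‖d - z0‖ = ‖z0 - d‖ := norm_sub_rev _ _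
      rw [h2] at h1
      linarith
  have hgd : s < g d := by
    have h1 : g z0 - g d = g (z0 - d) := by rw [map_sub]
    have h2 : g (z0 - d) ≤ ‖g (z0 - d)‖ := le_abs_self _
    have h3 : ‖g (z0 - d)‖ ≤ ‖g‖ * ‖z0 - d‖ := g.le_opNorm _
    rw [hgnorm, one_mul] at h3
    linarith
  exact absurd (hgA d hdA) (not_lt.mpr (le_of_lt hgd))

set_option maxHeartbeats 1000000 in
theorem backward (X : Type) [NormedAddCommGroup X] [NormedSpace ℝ X]
    (D : Set X) (hD : Dense D)
    (h : ∀ ε > (0:ℝ), ∀ x ∈ D, x ≠ 0 →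
      x ∈ closure (ratSet {y : X | y ∈ D ∧ ‖y‖ < ‖x‖ ∧ 2*‖x‖ - ε < ‖x - y‖})) :
    HasDLD2P X := by
  intro ε hε S hS x hxS hx1
  obtain ⟨f, α, hf, hα, rfl⟩ := hS
  obtain ⟨hx1', hxf⟩ := hxS
  set γ : ℝ := f x - (1 - α) with hγdef
  have hγ0 : 0 < γ := by rw [hγdef]; linarith
  clear_value γ
  set δ : ℝ := min (γ/4) (min (ε/6) (1/2)) with hδdef
  have hδ0 : 0 < δ := lt_min (by linarith) (lt_min (by linarith) (by norm_num))
  have hδγ : δ ≤ γ/4 := min_le_left _ _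
  have hδε : δ ≤ ε/6 := le_trans (min_le_right _ _) (min_le_left _ _)
  have hδ2 : δ ≤ 1/2 := le_trans (min_le_right _ _) (min_le_right _ _)
  clear_value δ
  obtain ⟨x', hx'D, hxx'⟩ := dense_near hD x hδ0
  have hx'n1 : 1 - δ ≤ ‖x'‖ := by
    have h1 := norm_sub_norm_le x x'
    rw [hx1] at h1
    linarith
  have hx'n2 : ‖x'‖ ≤ 1 + δ := by
    have h1 := norm_sub_norm_le x' x
    rw [hx1, norm_sub_rev] at h1
    linarith
  have hx'0 : x' ≠ 0 := by
    intro h0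
    rw [h0, norm_zero] at hx'n1
    linarith
  have hmem := h δ hδ0 x' hx'D hx'0
  obtain ⟨z, hzmem, hdz⟩ := Metric.mem_closure_iff.mp hmem δ hδ0
  rw [dist_eq_norm] at hdz
  obtain ⟨n, q, yv, hq, hqs, hyv, hzeq⟩ := hzmem
  have hfz1 : f x' - f z ≤ δ := by
    have h1 : f x' - f z = f (x' - z) := by rw [map_sub]
    have h2 : f (x' - z) ≤ ‖f (x' - z)‖ := le_abs_self _
    have h3 : ‖f (x' - z)‖ ≤ ‖f‖ * ‖x' - z‖ := f.le_opNorm _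
    rw [hf, one_mul] at h3
    linarith
  have hfx' : f x - f x' ≤ δ := by
    have h1 : f x - f x' = f (x - x') := by rw [map_sub]
    have h2 : f (x - x') ≤ ‖f (x - x')‖ := le_abs_self _
    have h3 : ‖f (x - x')‖ ≤ ‖f‖ * ‖x - x'‖ := f.le_opNorm _
    rw [hf, one_mul] at h3
    linarith
  have hfzsum : f z = ∑ i, (q i : ℝ) * f (yv i) := by
    rw [hzeq, map_sum]
    exact Finset.sum_congr rfl fun i _ => by rw [map_smul, smul_eq_mul]
  obtain ⟨i, hi⟩ := exists_big q (fun i => f (yv i)) hq hqs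
    (show f x - 2*δ ≤ _ by rw [← hfzsum]; linarith)
  obtain ⟨hyD, hyn, hyd⟩ := hyv i
  set y : X := yv i with hydef
  clear_value y
  have hδ1 : (0:ℝ) < 1 + δ := by linarith
  have hyn2 : ‖y‖ ≤ 1 + δ := le_trans hyn.le hx'n2
  refine ⟨(1+δ)⁻¹ • y, ⟨?_, ?_⟩, ?_⟩
  · rw [norm_smul, Real.norm_eq_abs, abs_of_pos (inv_pos.mpr hδ1)]
    calc (1+δ)⁻¹ * ‖y‖ ≤ (1+δ)⁻¹ * (1+δ) :=
        mul_le_mul_of_nonneg_left hyn2 (by positivity)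
      _ = 1 := inv_mul_cancel₀ (ne_of_gt hδ1)
  · rw [map_smul, smul_eq_mul, ← div_eq_inv_mul, lt_div_iff₀ hδ1]
    -- (1 - α) * (1 + δ) < f y
    have hfy : 1 - α + γ - 2*δ ≤ f y := by
      have : f x = 1 - α + γ := by rw [hγdef]; ring
      linarith [hi]
    nlinarith
  · have e1 : ‖y - (1+δ)⁻¹ • y‖ ≤ δ := by
      have h1 : y - (1+δ)⁻¹ • y = (1 - (1+δ)⁻¹) • y := by module
      have h2 : 1 - (1+δ)⁻¹ = δ/(1+δ) := by field_simp; ring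
      rw [h1, h2, norm_smul, Real.norm_eq_abs, abs_of_pos (by positivity)]
      calc δ/(1+δ) * ‖y‖ ≤ δ/(1+δ) * (1+δ) :=
          mul_le_mul_of_nonneg_left hyn2 (by positivity)
        _ = δ := by field_simp
    have e2 : ‖x' - y‖ ≤ ‖x' - x‖ + ‖x - (1+δ)⁻¹ • y‖ + ‖(1+δ)⁻¹ • y - y‖ := by
      have h1 : x' - y = (x' - x) + (x - (1+δ)⁻¹ • y) + ((1+δ)⁻¹ • y - y) := by abel
      rw [h1]
      exact norm_add₃_le
    have e3 : ‖x' - x‖ = ‖x - x'‖ := norm_sub_rev _ _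
    have e4 : ‖(1+δ)⁻¹ • y - y‖ = ‖y - (1+δ)⁻¹ • y‖ := norm_sub_rev _ _
    -- ‖x' - y‖ > 2‖x'‖ - δ ≥ 2 - 3δ
    linarith

end Stmt3Aux

theorem stmt3 (X : Type) [NormedAddCommGroup X] [NormedSpace ℝ X] [CompleteSpace X]
    (D : Set X) (hD : Dense D) :
    HasDLD2P X ↔
      ∀ ε > (0 : ℝ), ∀ x ∈ D, x ≠ 0 →
        x ∈ clCoQ {y : X | y ∈ D ∧ ‖y‖ < ‖x‖ ∧ 2 * ‖x‖ - ε < ‖x - y‖} := by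
  constructor
  · intro hX ε hε x hxD hx0
    rw [Stmt3Aux.clCoQ_eq]
    exact Stmt3Aux.forward X D hD hX ε hε x hxD hx0
  · intro hcond
    refine Stmt3Aux.backward X D hD ?_
    intro ε hε x hxD hx0
    have := hcond ε hε x hxD hx0
    rwa [Stmt3Aux.clCoQ_eq] at this
end

section
/- Let X be a real Banach space and D ⊆ X a dense subset. Then X is locally octahedral if and only if for every ε > 0 and every x ∈ D there exists y ∈ D with ‖y‖ ≠ 0 such that ‖ ‖y‖·x − ‖x‖·y ‖ > ‖y‖·(2‖x‖ − ε) and ‖ ‖y‖·x + ‖x‖·y ‖ > ‖y‖·(2‖x‖ − ε). -/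
open scoped BigOperators Topology

section LOHHelpers

variable {X : Type} [NormedAddCommGroup X] [NormedSpace ℝ X]

/-- One-sided homogenization lemma. -/
lemma loh_oneside (x u : X) (hu : ‖u‖ = 1) (hx : 0 < ‖x‖) (δ : ℝ) (hδ0 : 0 ≤ δ) (hδ1 : δ ≤ 1)
    (h : 2 * ‖x‖ - δ * ‖x‖ ≤ ‖x + ‖x‖ • u‖) :
    ∀ t : ℝ, 0 ≤ t → (1 - δ) * (t * ‖x‖ + 1) ≤ ‖t • x + u‖ := by
  intro t ht
  set t₀ : ℝ := ‖x‖⁻¹ with ht₀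
  have ht₀pos : 0 < t₀ := inv_pos.mpr hx
  have h1 : t₀ * ‖x‖ = 1 := inv_mul_cancel₀ hx.ne'
  have key : 2 - δ ≤ ‖t₀ • x + u‖ := by
    have e : x + ‖x‖ • u = ‖x‖ • (t₀ • x + u) := by
      rw [smul_add, smul_smul, ht₀, mul_inv_cancel₀ hx.ne', one_smul]
    rw [e, norm_smul, Real.norm_of_nonneg hx.le] at h
    nlinarith
  rcases le_or_gt t t₀ with hle | hgt
  · have e : t₀ • x + u = (t • x + u) + (t₀ - t) • x := by module
    have hexp : (t₀ - t) * ‖x‖ = 1 - t * ‖x‖ := by rw [sub_mul, h1]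
    have hb : ‖t₀ • x + u‖ ≤ ‖t • x + u‖ + (1 - t * ‖x‖) := by
      rw [← hexp, e]
      calc ‖(t • x + u) + (t₀ - t) • x‖ ≤ ‖t • x + u‖ + ‖(t₀ - t) • x‖ := norm_add_le _ _
        _ = ‖t • x + u‖ + (t₀ - t) * ‖x‖ := by
            rw [norm_smul, Real.norm_of_nonneg (by linarith)]
    nlinarith [mul_nonneg hδ0 (mul_nonneg ht hx.le)]
  · have htpos : 0 < t := lt_trans ht₀pos hgt
    have e : t₀ • x + u = (t₀ / t) • (t • x + u) + (1 - t₀ / t) • u := by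
      match_scalars <;> field_simp <;> ring
    have hle1 : t₀ / t ≤ 1 := by
      rw [div_le_one htpos]; exact hgt.le
    have hb : ‖t₀ • x + u‖ ≤ (t₀ / t) * ‖t • x + u‖ + (1 - t₀ / t) := by
      rw [e]
      calc ‖(t₀ / t) • (t • x + u) + (1 - t₀ / t) • u‖
          ≤ ‖(t₀ / t) • (t • x + u)‖ + ‖(1 - t₀ / t) • u‖ := norm_add_le _ _
        _ = (t₀ / t) * ‖t • x + u‖ + (1 - t₀ / t) := by
            rw [norm_smul, norm_smul, Real.norm_of_nonneg (by positivity),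
              Real.norm_of_nonneg (by linarith), hu, mul_one]
    have h2 : 1 - δ + t₀ / t ≤ (t₀ / t) * ‖t • x + u‖ := by linarith
    have h5 := mul_le_mul_of_nonneg_left h2 (le_of_lt (div_pos htpos ht₀pos))
    have h6 : t / t₀ * (t₀ / t * ‖t • x + u‖) = ‖t • x + u‖ := by
      field_simp
    have h7 : t / t₀ * (1 - δ + t₀ / t) = t * ‖x‖ * (1 - δ) + 1 := by
      rw [ht₀]; field_simp
    nlinarith [mul_nonneg hδ0 (mul_nonneg ht hx.le)]

lemma loh_key (x u : X) (hu : ‖u‖ = 1) (hx : 0 < ‖x‖) (δ : ℝ) (hδ0 : 0 ≤ δ) (hδ1 : δ ≤ 1)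
    (h1 : 2 * ‖x‖ - δ * ‖x‖ ≤ ‖x + ‖x‖ • u‖)
    (h2 : 2 * ‖x‖ - δ * ‖x‖ ≤ ‖x - ‖x‖ • u‖) :
    ∀ t : ℝ, (1 - δ) * (|t| * ‖x‖ + 1) ≤ ‖t • x + u‖ := by
  intro t
  rcases le_or_gt 0 t with ht | ht
  · rw [abs_of_nonneg ht]
    exact loh_oneside x u hu hx δ hδ0 hδ1 h1 t ht
  · rw [abs_of_neg ht]
    have hu' : ‖-u‖ = 1 := by rwa [norm_neg]
    have h2' : 2 * ‖x‖ - δ * ‖x‖ ≤ ‖x + ‖x‖ • (-u)‖ := by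
      rw [smul_neg, ← sub_eq_add_neg]; exact h2
    have := loh_oneside x (-u) hu' hx δ hδ0 hδ1 h2' (-t) (by linarith)
    have e : ‖(-t) • x + -u‖ = ‖t • x + u‖ := by
      rw [show (-t) • x + -u = -(t • x + u) by module, norm_neg]
    rwa [e] at this

variable {X : Type} [NormedAddCommGroup X] [NormedSpace ℝ X]

lemma loh_approx (x z y : X) (ε : ℝ) (hε : 0 < ε) (hx : 0 < ‖x‖) (hz : ‖z‖ = 1)
    (h : 2 * ‖x‖ - ε / 4 ≤ ‖x + ‖x‖ • z‖)
    (hzy : ‖z - y‖ < ε / (4 * (4 * ‖x‖ + ε + 1))) :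
    ‖y‖ * (2 * ‖x‖ - ε) < ‖‖y‖ • x + ‖x‖ • y‖ := by
  set δ : ℝ := ε / (4 * (4 * ‖x‖ + ε + 1)) with hδ
  have hden : 0 < 4 * (4 * ‖x‖ + ε + 1) := by nlinarith
  have hδpos : 0 < δ := div_pos hε hden
  have hδe : δ * (4 * (4 * ‖x‖ + ε + 1)) = ε := div_mul_cancel₀ _ hden.ne'
  have hy1 : |‖y‖ - 1| < δ := by
    calc |‖y‖ - 1| = |‖y‖ - ‖z‖| := by rw [hz]
      _ ≤ ‖y - z‖ := abs_norm_sub_norm_le _ _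
      _ = ‖z - y‖ := by rw [norm_sub_rev]
      _ < δ := hzy
  have hy2 : ‖y‖ ≤ 1 + δ := by cases abs_lt.mp hy1; linarith
  have hy3 : 1 - δ ≤ ‖y‖ := by cases abs_lt.mp hy1; linarith
  have edec : x + ‖x‖ • z = (‖y‖ • x + ‖x‖ • y) + ((1 - ‖y‖) • x + ‖x‖ • (z - y)) := by
    module
  have hB : ‖(1 - ‖y‖) • x + ‖x‖ • (z - y)‖ ≤ 2 * δ * ‖x‖ := by
    calc ‖(1 - ‖y‖) • x + ‖x‖ • (z - y)‖
        ≤ ‖(1 - ‖y‖) • x‖ + ‖‖x‖ • (z - y)‖ := norm_add_le _ _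
      _ = |1 - ‖y‖| * ‖x‖ + ‖x‖ * ‖z - y‖ := by
          rw [norm_smul, norm_smul, Real.norm_eq_abs, Real.norm_of_nonneg hx.le]
      _ ≤ δ * ‖x‖ + ‖x‖ * δ := by
          have : |1 - ‖y‖| = |‖y‖ - 1| := abs_sub_comm _ _
          have h1 : |1 - ‖y‖| * ‖x‖ ≤ δ * ‖x‖ :=
            mul_le_mul_of_nonneg_right (by rw [this]; exact hy1.le) hx.le
          have h2 : ‖x‖ * ‖z - y‖ ≤ ‖x‖ * δ :=
            mul_le_mul_of_nonneg_left hzy.le hx.le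
          linarith
      _ = 2 * δ * ‖x‖ := by ring
  have hN : 2 * ‖x‖ - ε / 4 - 2 * δ * ‖x‖ ≤ ‖‖y‖ • x + ‖x‖ • y‖ := by
    have : ‖x + ‖x‖ • z‖ ≤ ‖‖y‖ • x + ‖x‖ • y‖ + ‖(1 - ‖y‖) • x + ‖x‖ • (z - y)‖ := by
      rw [edec]; exact norm_add_le _ _
    linarith
  nlinarith [mul_nonneg hδpos.le hx.le, mul_nonneg hδpos.le hε.le]

lemma loh_arith (ε ε' b T : ℝ) (hb : 0 < b) (hT : 0 ≤ T) (hε'pos : 0 < ε')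
    (hε'1 : ε' ≤ 1) (hε'ε : ε' ≤ ε) :
    (1 - ε) * (T * b + 1) + T * (ε' * b / 4) ≤ (1 - ε' / 2) * (T * (b - ε' * b / 4) + 1) := by
  nlinarith [mul_nonneg hT hb.le, mul_nonneg (mul_nonneg hε'pos.le hT) hb.le,
    mul_nonneg (mul_nonneg (mul_nonneg hε'pos.le hε'pos.le) hT) hb.le,
    mul_nonneg (mul_nonneg (sub_nonneg.mpr hε'ε) hT) hb.le]

end LOHHelpers

theorem stmt4 (X : Type) [NormedAddCommGroup X] [NormedSpace ℝ X] [CompleteSpace X]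
    (D : Set X) (hD : Dense D) :
    IsLOH X ↔
      ∀ ε > (0 : ℝ), ∀ x ∈ D, ∃ y ∈ D, ‖y‖ ≠ 0 ∧
        ‖y‖ * (2 * ‖x‖ - ε) < ‖‖y‖ • x - ‖x‖ • y‖ ∧
        ‖y‖ * (2 * ‖x‖ - ε) < ‖‖y‖ • x + ‖x‖ • y‖ := by
  constructor
  · -- forward
    intro hL ε hε x hxD
    by_cases h0 : ‖x‖ = 0
    · -- x = 0 case
      obtain ⟨z, hz, -⟩ := hL (1/2) (by norm_num) 0
      obtain ⟨y, hyD, hyz⟩ := Metric.mem_closure_iff.mp (hD z) (1/2) (by norm_num)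
      rw [dist_eq_norm] at hyz
      have hy1 : |‖z‖ - ‖y‖| < 1/2 := lt_of_le_of_lt (abs_norm_sub_norm_le _ _) hyz
      have hypos : 0 < ‖y‖ := by
        have := abs_lt.mp hy1; rw [hz] at this; linarith [this.2]
      have hx0 : x = 0 := norm_eq_zero.mp h0
      subst hx0
      refine ⟨y, hyD, hypos.ne', ?_, ?_⟩ <;>
      · simp only [norm_zero, smul_zero, zero_smul, zero_sub, sub_zero, add_zero, zero_add,
          norm_neg, mul_zero, zero_mul]
        nlinarith [mul_pos hypos hε]
    · have hx : 0 < ‖x‖ := (norm_nonneg x).lt_of_ne' h0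
      set ε₀ : ℝ := ε / (8 * ‖x‖) with hε₀
      have hε₀pos : 0 < ε₀ := div_pos hε (by linarith)
      have hε₀e : ε₀ * ‖x‖ = ε / 8 := by
        rw [hε₀]; field_simp
      obtain ⟨z, hz, hzt⟩ := hL ε₀ hε₀pos x
      have habs : |‖x‖⁻¹| * ‖x‖ = 1 := by
        rw [abs_of_pos (inv_pos.mpr hx), inv_mul_cancel₀ hx.ne']
      have hplus : 2 * ‖x‖ - ε / 4 ≤ ‖x + ‖x‖ • z‖ := by
        have h1 := hzt ‖x‖⁻¹
        rw [habs, hz] at h1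
        have e : x + ‖x‖ • z = ‖x‖ • (‖x‖⁻¹ • x + z) := by
          rw [smul_add, smul_smul, mul_inv_cancel₀ hx.ne', one_smul]
        rw [e, norm_smul, Real.norm_of_nonneg hx.le]
        nlinarith
      have hminus : 2 * ‖x‖ - ε / 4 ≤ ‖x - ‖x‖ • z‖ := by
        have h1 := hzt (-‖x‖⁻¹)
        rw [abs_neg, habs, hz] at h1
        have e : x - ‖x‖ • z = -(‖x‖ • ((-‖x‖⁻¹) • x + z)) := by
          rw [smul_add, smul_smul]
          rw [show ‖x‖ * -‖x‖⁻¹ = -1 by field_simp]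
          module
        rw [e, norm_neg, norm_smul, Real.norm_of_nonneg hx.le]
        nlinarith
      set δ : ℝ := ε / (4 * (4 * ‖x‖ + ε + 1)) with hδ
      have hden : 0 < 4 * (4 * ‖x‖ + ε + 1) := by nlinarith
      have hδpos : 0 < δ := div_pos hε hden
      obtain ⟨y, hyD, hyz⟩ := Metric.mem_closure_iff.mp (hD z) δ hδpos
      rw [dist_eq_norm] at hyz
      have hδlt : δ < 1/2 := by
        rw [hδ, div_lt_iff₀ hden]; nlinarith
      have hy1 : |‖z‖ - ‖y‖| < δ := lt_of_le_of_lt (abs_norm_sub_norm_le _ _) hyz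
      have hypos : 0 < ‖y‖ := by
        have := abs_lt.mp hy1; rw [hz] at this; linarith [this.2]
      refine ⟨y, hyD, hypos.ne', ?_, ?_⟩
      · -- minus sign : apply loh_approx with -z, -y
        have hz' : ‖-z‖ = 1 := by rwa [norm_neg]
        have hplus' : 2 * ‖x‖ - ε / 4 ≤ ‖x + ‖x‖ • (-z)‖ := by
          rw [smul_neg, ← sub_eq_add_neg]; exact hminus
        have hzy' : ‖(-z) - (-y)‖ < δ := by
          rw [show (-z) - (-y) = -(z - y) by module, norm_neg]; exact hyz
        have := loh_approx x (-z) (-y) ε hε hx hz' hplus' hzy'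
        rw [norm_neg, smul_neg, ← sub_eq_add_neg] at this
        exact this
      · exact loh_approx x z y ε hε hx hz hplus hyz
  · -- backward
    intro h ε hε x
    have hXnt : ∃ u : X, ‖u‖ = 1 := by
      obtain ⟨x₀, hx₀⟩ := hD.nonempty
      obtain ⟨y, -, hy0, -⟩ := h 1 one_pos x₀ hx₀
      exact ⟨‖y‖⁻¹ • y, by
        rw [norm_smul, norm_inv, norm_norm, inv_mul_cancel₀ hy0]⟩
    by_cases h0 : ‖x‖ = 0
    · obtain ⟨u, hu⟩ := hXnt
      refine ⟨u, hu, ?_⟩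
      intro t
      have hx0 : x = 0 := norm_eq_zero.mp h0
      rw [hx0, smul_zero, zero_add, hu, norm_zero]
      nlinarith [abs_nonneg t]
    · have hx : 0 < ‖x‖ := (norm_nonneg x).lt_of_ne' h0
      obtain ⟨ε', hε'pos, hε'1, hε'ε⟩ : ∃ ε' : ℝ, 0 < ε' ∧ ε' ≤ 1 ∧ ε' ≤ ε :=
        ⟨min ε 1, lt_min hε one_pos, min_le_right _ _, min_le_left _ _⟩
      obtain ⟨θ, hθ⟩ : ∃ θ : ℝ, θ = ε' * ‖x‖ / 4 := ⟨_, rfl⟩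
      have hθpos : 0 < θ := by rw [hθ]; positivity
      obtain ⟨x', hx'D, hxx'⟩ := Metric.mem_closure_iff.mp (hD x) θ hθpos
      rw [dist_eq_norm] at hxx'
      have hnx' : ‖x‖ - θ ≤ ‖x'‖ := by
        have := abs_lt.mp (lt_of_le_of_lt (abs_norm_sub_norm_le x x') hxx')
        linarith [this.2]
      have hθx : θ ≤ ‖x‖ / 4 := by
        rw [hθ]
        have := mul_le_mul_of_nonneg_right hε'1 hx.le
        linarith
      have hx' : 0 < ‖x'‖ := by linarith
      obtain ⟨y, -, hy0, hm, hp⟩ := h (ε' / 2 * ‖x'‖) (by positivity) x' hx'D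
      have hypos : 0 < ‖y‖ := (norm_nonneg y).lt_of_ne' hy0
      set u : X := ‖y‖⁻¹ • y with hu'
      have hu : ‖u‖ = 1 := by
        rw [hu', norm_smul, norm_inv, norm_norm, inv_mul_cancel₀ hy0]
      have hplus : 2 * ‖x'‖ - ε' / 2 * ‖x'‖ ≤ ‖x' + ‖x'‖ • u‖ := by
        have e : ‖y‖ • (x' + ‖x'‖ • u) = ‖y‖ • x' + ‖x'‖ • y := by
          rw [hu']; match_scalars <;> field_simp <;> ring
        have e2 : ‖y‖ * ‖x' + ‖x'‖ • u‖ = ‖‖y‖ • x' + ‖x'‖ • y‖ := by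
          rw [← e, norm_smul, Real.norm_of_nonneg hypos.le]
        have := hp
        rw [← e2] at this
        have := lt_of_mul_lt_mul_left this hypos.le
        linarith
      have hminus : 2 * ‖x'‖ - ε' / 2 * ‖x'‖ ≤ ‖x' - ‖x'‖ • u‖ := by
        have e : ‖y‖ • (x' - ‖x'‖ • u) = ‖y‖ • x' - ‖x'‖ • y := by
          rw [hu']; match_scalars <;> field_simp <;> ring
        have e2 : ‖y‖ * ‖x' - ‖x'‖ • u‖ = ‖‖y‖ • x' - ‖x'‖ • y‖ := by
          rw [← e, norm_smul, Real.norm_of_nonneg hypos.le]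
        have := hm
        rw [← e2] at this
        have := lt_of_mul_lt_mul_left this hypos.le
        linarith
      have key := loh_key x' u hu hx' (ε' / 2) (by linarith) (by linarith) hplus hminus
      clear_value u
      refine ⟨u, hu, ?_⟩
      intro t
      rw [hu]
      have k := key t
      have hta : (0:ℝ) ≤ |t| := abs_nonneg t
      have hchain : ‖t • x' + u‖ - |t| * θ ≤ ‖t • x + u‖ := by
        have e : t • x' + u = (t • x + u) + t • (x' - x) := by module
        have : ‖t • x' + u‖ ≤ ‖t • x + u‖ + |t| * ‖x' - x‖ := by
          rw [e]
          calc ‖(t • x + u) + t • (x' - x)‖ ≤ ‖t • x + u‖ + ‖t • (x' - x)‖ := norm_add_le _ _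
            _ = ‖t • x + u‖ + |t| * ‖x' - x‖ := by rw [norm_smul, Real.norm_eq_abs]
        have h2 : ‖x' - x‖ < θ := by rwa [norm_sub_rev]
        nlinarith
      have step1 : (1 - ε' / 2) * (|t| * (‖x‖ - θ) + 1) ≤ (1 - ε' / 2) * (|t| * ‖x'‖ + 1) := by
        apply mul_le_mul_of_nonneg_left _ (by linarith : (0:ℝ) ≤ 1 - ε' / 2)
        have := mul_le_mul_of_nonneg_left hnx' hta
        linarith
      have step2 : (1 - ε) * (|t| * ‖x‖ + 1) + |t| * θ ≤ (1 - ε' / 2) * (|t| * (‖x‖ - θ) + 1) := by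
        rw [hθ]
        exact loh_arith ε ε' ‖x‖ |t| hx hta hε'pos hε'1 hε'ε
      linarith [k, hchain, step1, step2]
end

section
/- Let X be a real Banach space and D ⊆ X a dense subset. Then X is octahedral if and only if for every ε > 0, every n ∈ ℕ and all x_1, …, x_n ∈ D there exists y ∈ D with ‖y‖ ≠ 0 such that ‖ ‖y‖·x_i + ‖x_i‖·y ‖ > ‖y‖·(2‖x_i‖ − ε) for every i ∈ {1, …, n}. -/
open scoped BigOperators Topology

private lemma stmt5_scale {X : Type*} [NormedAddCommGroup X] [NormedSpace ℝ X]
    (E : Submodule ℝ X) (y : X) (ε : ℝ) (hε : 0 < ε) (hy : ‖y‖ = 1)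
    (h : ∀ x ∈ E, ‖x‖ = 1 → 2 - ε ≤ ‖x + y‖) :
    ∀ x ∈ E, (1 - ε) * (‖x‖ + ‖y‖) ≤ ‖x + y‖ := by
  intro x hx
  rcases le_or_gt (1 - ε) 0 with h1 | h1
  · have : (1 - ε) * (‖x‖ + ‖y‖) ≤ 0 :=
      mul_nonpos_of_nonpos_of_nonneg h1 (by positivity)
    exact this.trans (norm_nonneg _)
  rcases eq_or_ne x 0 with rfl | hx0
  · simp only [norm_zero, zero_add, hy]
    nlinarith [hε]
  have ht : (0:ℝ) < ‖x‖ := norm_pos_iff.mpr hx0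
  set t := ‖x‖ with htdef
  set u := t⁻¹ • x with hudef
  have humem : u ∈ E := E.smul_mem _ hx
  have hunorm : ‖u‖ = 1 := by
    rw [hudef, norm_smul, norm_inv, Real.norm_eq_abs, abs_of_pos ht]
    field_simp; exact htdef.symm
  have husp : t • u = x := by
    rw [hudef, smul_smul, mul_inv_cancel₀ ht.ne', one_smul]
  have hbase : 2 - ε ≤ ‖u + y‖ := h u humem hunorm
  rcases le_or_gt t 1 with hle | hlt
  · have hkey : (u + y) - (x + y) = (1 - t) • u := by
      rw [sub_smul, one_smul, husp]; abel
    have h2 : ‖u + y‖ - ‖x + y‖ ≤ ‖(1 - t) • u‖ := by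
      rw [← hkey]; exact norm_sub_norm_le _ _
    rw [norm_smul, hunorm, Real.norm_eq_abs, abs_of_nonneg (by linarith)] at h2
    rw [hy]
    nlinarith
  · have hkey : t • (u + y) - (x + y) = (t - 1) • y := by
      rw [smul_add, husp, sub_smul, one_smul]; abel
    have h2 : ‖t • (u + y)‖ - ‖x + y‖ ≤ ‖(t - 1) • y‖ := by
      rw [← hkey]; exact norm_sub_norm_le _ _
    rw [norm_smul, norm_smul, hy, Real.norm_eq_abs, Real.norm_eq_abs,
      abs_of_pos (by linarith : (0:ℝ) < t), abs_of_nonneg (by linarith : (0:ℝ) ≤ t - 1)] at h2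
    rw [hy]
    nlinarith

set_option maxHeartbeats 1000000 in
theorem stmt5 (X : Type) [NormedAddCommGroup X] [NormedSpace ℝ X] [CompleteSpace X]
    (D : Set X) (hD : Dense D) :
    IsOH X ↔
      ∀ ε > (0 : ℝ), ∀ (n : ℕ) (x : Fin n → X), (∀ i, x i ∈ D) →
        ∃ y ∈ D, ‖y‖ ≠ 0 ∧
          ∀ i, ‖y‖ * (2 * ‖x i‖ - ε) < ‖‖y‖ • x i + ‖x i‖ • y‖ := by
  constructor
  · -- forward
    intro hOH ε hε n x hx
    obtain ⟨M₀, hM₀⟩ := Finite.exists_le (fun i => ‖x i‖)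
    set M := max M₀ 0 with hMdef
    have hM0 : (0:ℝ) ≤ M := le_max_right _ _
    have hM : ∀ i, ‖x i‖ ≤ M := fun i => (hM₀ i).trans (le_max_left _ _)
    set ε' := ε / (2 * (M + 1)) with hε'def
    have hε' : 0 < ε' := by positivity
    have hε'id : 2 * ε' * (M + 1) = ε := by
      rw [hε'def]; field_simp
    haveI hfd : FiniteDimensional ℝ (Submodule.span ℝ (Set.range x)) :=
      FiniteDimensional.span_of_finite ℝ (Set.finite_range x)
    obtain ⟨y₀, hy₀n, hy₀⟩ := hOH _ hfd ε' hε'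
    have key : ∀ i, (2 - 2 * ε') * ‖x i‖ ≤ ‖x i + ‖x i‖ • y₀‖ := by
      intro i
      rcases eq_or_ne (x i) 0 with h0 | h0
      · simp [h0]
      · have hxi : (0:ℝ) < ‖x i‖ := norm_pos_iff.mpr h0
        have hmem : ‖x i‖⁻¹ • x i ∈ Submodule.span ℝ (Set.range x) :=
          Submodule.smul_mem _ _ (Submodule.subset_span ⟨i, rfl⟩)
        have hn1 : ‖‖x i‖⁻¹ • x i‖ = 1 := by
          rw [norm_smul, norm_inv, norm_norm]; field_simp
        have h1 := hy₀ _ hmem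
        rw [hn1, hy₀n] at h1
        have h2 : ‖x i + ‖x i‖ • y₀‖ = ‖x i‖ * ‖‖x i‖⁻¹ • x i + y₀‖ := by
          rw [← norm_smul_of_nonneg hxi.le, smul_add, smul_smul,
            mul_inv_cancel₀ hxi.ne', one_smul]
        rw [h2]
        nlinarith
    set δ := min (1/2 : ℝ) (ε' / (4 * M + ε + 1)) with hδdef
    have hδ0 : 0 < δ := lt_min (by norm_num) (by positivity)
    have hδh : δ ≤ 1/2 := min_le_left _ _
    have hδb : δ * (4 * M + ε + 1) ≤ ε' := by
      have h := min_le_right (1/2 : ℝ) (ε' / (4 * M + ε + 1))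
      rw [← hδdef] at h
      calc δ * (4 * M + ε + 1) ≤ (ε' / (4 * M + ε + 1)) * (4 * M + ε + 1) := by
            apply mul_le_mul_of_nonneg_right h (by positivity)
        _ = ε' := by field_simp
    obtain ⟨y, hyball, hyD⟩ := Metric.dense_iff.mp hD y₀ δ hδ0
    have hyclose : ‖y - y₀‖ < δ := by
      rw [← dist_eq_norm]; exact Metric.mem_ball.mp hyball
    have hy1 : |‖y‖ - 1| ≤ δ := by
      have := abs_norm_sub_norm_le y y₀
      rw [hy₀n] at this
      linarith [hyclose]
    have hy1' : 1 - δ ≤ ‖y‖ := by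
      have := abs_le.mp hy1; linarith [this.1]
    have hy1'' : ‖y‖ ≤ 1 + δ := by
      have := abs_le.mp hy1; linarith [this.2]
    have hypos : (0:ℝ) < ‖y‖ := by linarith
    refine ⟨y, hyD, hypos.ne', ?_⟩
    intro i
    have hxi0 : (0:ℝ) ≤ ‖x i‖ := norm_nonneg _
    have hxiM := hM i
    -- lower bound on the norm
    have hdecomp : (‖y‖ • x i + ‖x i‖ • y) - (x i + ‖x i‖ • y₀)
        = (‖y‖ - 1) • x i + ‖x i‖ • (y - y₀) := by
      rw [sub_smul, one_smul, smul_sub]; abel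
    have hlow : ‖x i + ‖x i‖ • y₀‖ - ‖‖y‖ • x i + ‖x i‖ • y‖
        ≤ ‖(‖y‖ - 1) • x i + ‖x i‖ • (y - y₀)‖ := by
      rw [← hdecomp]
      have := norm_sub_norm_le (x i + ‖x i‖ • y₀) (‖y‖ • x i + ‖x i‖ • y)
      calc ‖x i + ‖x i‖ • y₀‖ - ‖‖y‖ • x i + ‖x i‖ • y‖
          ≤ ‖(x i + ‖x i‖ • y₀) - (‖y‖ • x i + ‖x i‖ • y)‖ := this
        _ = ‖(‖y‖ • x i + ‖x i‖ • y) - (x i + ‖x i‖ • y₀)‖ := by rw [norm_sub_rev]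
    have hpert : ‖(‖y‖ - 1) • x i + ‖x i‖ • (y - y₀)‖ ≤ 2 * δ * M := by
      calc ‖(‖y‖ - 1) • x i + ‖x i‖ • (y - y₀)‖
          ≤ ‖(‖y‖ - 1) • x i‖ + ‖‖x i‖ • (y - y₀)‖ := norm_add_le _ _
        _ = |‖y‖ - 1| * ‖x i‖ + ‖x i‖ * ‖y - y₀‖ := by
            rw [norm_smul, norm_smul, Real.norm_eq_abs, Real.norm_eq_abs,
              abs_of_nonneg hxi0]
        _ ≤ δ * M + M * δ := by
            have a1 : |‖y‖ - 1| * ‖x i‖ ≤ δ * M := mul_le_mul hy1 (hM i) (norm_nonneg _) hδ0.le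
            have a2 : ‖x i‖ * ‖y - y₀‖ ≤ M * δ := mul_le_mul (hM i) hyclose.le (norm_nonneg _) hM0
            linarith
        _ = 2 * δ * M := by ring
    -- bound on the LHS
    have habs : |2 * ‖x i‖ - ε| ≤ 2 * M + ε := by
      rw [abs_le]; constructor <;> nlinarith
    have hLHS : ‖y‖ * (2 * ‖x i‖ - ε) ≤ (2 * ‖x i‖ - ε) + δ * (2 * M + ε) := by
      have h3 : (‖y‖ - 1) * (2 * ‖x i‖ - ε) ≤ δ * (2 * M + ε) := by
        calc (‖y‖ - 1) * (2 * ‖x i‖ - ε) ≤ |(‖y‖ - 1) * (2 * ‖x i‖ - ε)| := le_abs_self _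
          _ = |‖y‖ - 1| * |2 * ‖x i‖ - ε| := abs_mul _ _
          _ ≤ δ * (2 * M + ε) := by
              apply mul_le_mul hy1 habs (abs_nonneg _) hδ0.le
      nlinarith
    have hkey := key i
    -- final chain
    have hfin : δ * (4 * M + ε) + 2 * ε' * ‖x i‖ < ε := by
      have h4 : 2 * ε' * ‖x i‖ ≤ 2 * ε' * M := by nlinarith
      nlinarith [h4, hδb, hε'id, hδ0.le, hε'.le, hδh]
    linarith [hlow, hpert, hLHS, hkey, hfin]
  · -- reverse
    intro h E hE ε hε
    set η := ε / 16 with hηdef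
    have hη : 0 < η := by positivity
    haveI := hE
    haveI : ProperSpace E := FiniteDimensional.proper ℝ E
    -- compact sphere of E inside X
    have hKcomp : IsCompact ((E : Set X) ∩ Metric.sphere 0 1) := by
      have h1 : IsCompact (Metric.sphere (0:E) 1) := isCompact_sphere _ _
      have h2 := h1.image continuous_subtype_val
      have heq : (Subtype.val '' (Metric.sphere (0:E) 1)) = (E : Set X) ∩ Metric.sphere 0 1 := by
        ext z
        constructor
        · rintro ⟨⟨w, hw⟩, hn, rfl⟩
          simp only [mem_sphere_iff_norm, sub_zero] at hn
          exact ⟨hw, by simpa [mem_sphere_iff_norm] using hn⟩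
        · rintro ⟨hz, hn⟩
          simp only [Set.mem_inter_iff, mem_sphere_iff_norm, sub_zero] at hn
          exact ⟨⟨z, hz⟩, by simpa [mem_sphere_iff_norm] using hn, rfl⟩
      rwa [heq] at h2
    obtain ⟨t, htfin, htcov⟩ := Metric.totallyBounded_iff.mp hKcomp.totallyBounded η hη
    obtain ⟨m, f, hf⟩ := htfin.fin_embedding
    -- approximate net points by D
    have hDnet : ∀ p : X, ∃ q, q ∈ D ∧ dist q p < η := by
      intro p
      obtain ⟨q, hq1, hq2⟩ := Metric.dense_iff.mp hD p η hη
      exact ⟨q, hq2, Metric.mem_ball.mp hq1⟩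
    choose g hgD hgd using hDnet
    obtain ⟨y, hyD, hy0, hy⟩ := h (ε/2) (by positivity) m (fun j => g (f j)) (fun j => hgD _)
    have hyn : (0:ℝ) < ‖y‖ := lt_of_le_of_ne (norm_nonneg _) (Ne.symm hy0)
    set y' := ‖y‖⁻¹ • y with hy'def
    have hy'n : ‖y'‖ = 1 := by
      rw [hy'def, norm_smul, norm_inv, norm_norm]; field_simp
    have key : ∀ j, 2 * ‖g (f j)‖ - ε/2 < ‖g (f j) + ‖g (f j)‖ • y'‖ := by
      intro j
      have h1 := hy j
      have h2 : ‖y‖ • g (f j) + ‖g (f j)‖ • y = ‖y‖ • (g (f j) + ‖g (f j)‖ • y') := by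
        rw [smul_add, hy'def, smul_smul, smul_smul,
          mul_comm (‖y‖) (‖g (f j)‖), mul_assoc, mul_inv_cancel₀ hyn.ne', mul_one]
      rw [h2, norm_smul, Real.norm_eq_abs, abs_of_pos hyn] at h1
      have := lt_of_mul_lt_mul_left h1 hyn.le
      linarith
    refine ⟨y', hy'n, stmt5_scale E y' ε hε hy'n ?_⟩
    intro u huE hun
    have huK : u ∈ (E : Set X) ∩ Metric.sphere 0 1 := ⟨huE, by simp [mem_sphere_iff_norm, hun]⟩
    obtain ⟨p, hpt, hpball⟩ := Set.mem_iUnion₂.mp (htcov huK)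
    obtain ⟨j, hj⟩ : ∃ j, f j = p := by
      rw [← hf] at hpt; exact hpt
    set q := g (f j) with hqdef
    have hqp : dist q p < η := by rw [hqdef, hj]; exact hgd p
    have hup : dist u p < η := Metric.mem_ball.mp hpball
    have huq : ‖u - q‖ < 2 * η := by
      have : dist u q < 2 * η := by
        calc dist u q ≤ dist u p + dist p q := dist_triangle _ _ _
          _ = dist u p + dist q p := by rw [dist_comm p q]
          _ < η + η := by linarith
          _ = 2 * η := by ring
      rwa [dist_eq_norm] at this
    have hqnorm : |‖q‖ - 1| ≤ 2 * η := by
      have h1 := abs_norm_sub_norm_le q u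
      rw [hun, norm_sub_rev] at h1
      linarith [h1, huq]
    have hq1 : 1 - 2*η ≤ ‖q‖ := by have := abs_le.mp hqnorm; linarith [this.1]
    have hq2 : ‖q‖ ≤ 1 + 2*η := by have := abs_le.mp hqnorm; linarith [this.2]
    have hkeyj := key j
    rw [← hqdef] at hkeyj
    have hdecomp : (u + y') - (q + ‖q‖ • y') = (u - q) + (1 - ‖q‖) • y' := by
      rw [sub_smul, one_smul]; abel
    have hlow : ‖q + ‖q‖ • y'‖ - ‖u + y'‖ ≤ ‖u - q‖ + |1 - ‖q‖| := by
      have h1 := norm_sub_norm_le (q + ‖q‖ • y') (u + y')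
      have h2 : ‖(q + ‖q‖ • y') - (u + y')‖ = ‖(u + y') - (q + ‖q‖ • y')‖ := norm_sub_rev _ _
      rw [h2, hdecomp] at h1
      calc ‖q + ‖q‖ • y'‖ - ‖u + y'‖ ≤ ‖(u - q) + (1 - ‖q‖) • y'‖ := h1
        _ ≤ ‖u - q‖ + ‖(1 - ‖q‖) • y'‖ := norm_add_le _ _
        _ = ‖u - q‖ + |1 - ‖q‖| := by rw [norm_smul, Real.norm_eq_abs, hy'n, mul_one]
    have habs : |1 - ‖q‖| ≤ 2 * η := by rw [abs_sub_comm]; exact hqnorm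
    have : 2 - ε ≤ ‖u + y'‖ := by
      have hηε : 16 * η = ε := by rw [hηdef]; field_simp
      nlinarith [hlow, hkeyj, huq, habs, hq1]
    exact this
end

section
/- The set {μ ∈ 𝒫 : the closed unit ball of X_μ is dentable} is an Fσδ subset of 𝒫 (a countable intersection of countable unions of closed sets); equivalently, its complement {μ ∈ 𝒫 : B_{X_μ} is not dentable} is a countable union of Gδ subsets of 𝒫. -/
open scoped BigOperators Topology

set_option linter.unusedVariables false
set_option linter.unusedSectionVars false
set_option maxHeartbeats 1000000



namespace S17

variable {μ : (ℕ →₀ ℚ) → ℝ}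

lemma sm_zero (h : IsSeminormV μ) : μ 0 = 0 := by
  have := h.1 0 0; simpa using this

lemma sm_neg (h : IsSeminormV μ) (v : ℕ →₀ ℚ) : μ (-v) = μ v := by
  have := h.1 (-1) v; simpa using this

lemma sm_nonneg (h : IsSeminormV μ) (v : ℕ →₀ ℚ) : 0 ≤ μ v := by
  have h2 : μ 0 ≤ μ v + μ (-v) := by
    have := h.2 v (-v); simpa using this
  rw [sm_zero h, sm_neg h] at h2
  linarith

lemma sm_sub_le (h : IsSeminormV μ) (u v : ℕ →₀ ℚ) : μ u ≤ μ (u - v) + μ v := by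
  have := h.2 (u - v) v; simpa using this

lemma abs_sm_sub (h : IsSeminormV μ) (u v : ℕ →₀ ℚ) : |μ u - μ v| ≤ μ (u - v) := by
  rw [abs_le]
  constructor
  · have h1 : μ v ≤ μ (v - u) + μ u := sm_sub_le h v u
    have h2 : μ (v - u) = μ (u - v) := by rw [← sm_neg h (u - v), neg_sub]
    linarith
  · have := sm_sub_le h u v; linarith

lemma sm_sum_le (h : IsSeminormV μ) {α : Type*} (s : Finset α) (f : α → (ℕ →₀ ℚ)) :
    μ (∑ i ∈ s, f i) ≤ ∑ i ∈ s, μ (f i) := by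
  classical
  induction s using Finset.induction_on with
  | empty => simp [sm_zero h]
  | insert a s hx ih =>
    rw [Finset.sum_insert hx, Finset.sum_insert hx]
    exact le_trans (h.2 _ _) (by linarith)

/-- coordinate bound -/
lemma sm_le_coord (h : IsSeminormV μ) (u : ℕ →₀ ℚ) (S : Finset ℕ) (hS : u.support ⊆ S) :
    μ u ≤ ∑ i ∈ S, |(u i : ℝ)| * μ (Finsupp.single i 1) := by
  classical
  have hrep : u = ∑ i ∈ S, Finsupp.single i (u i) := by
    ext j
    rw [Finsupp.finset_sum_apply]
    simp only [Finsupp.single_apply, Finset.sum_ite_eq' S]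
    by_cases hj : j ∈ S
    · simp [hj]
    · simp only [hj, if_false]
      exact Finsupp.notMem_support_iff.mp (fun hs => hj (hS hs))
  calc μ u = μ (∑ i ∈ S, Finsupp.single i (u i)) := by rw [← hrep]
    _ ≤ ∑ i ∈ S, μ (Finsupp.single i (u i)) := sm_sum_le h _ _
    _ = ∑ i ∈ S, |(u i : ℝ)| * μ (Finsupp.single i 1) := by
        refine Finset.sum_congr rfl (fun i _ => ?_)
        have : Finsupp.single i (u i) = (u i) • Finsupp.single i (1:ℚ) := by
          rw [Finsupp.smul_single]; norm_num
        rw [this, h.1]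

end S17

section
open Filter

noncomputable def qk (t : ℝ) (k : ℕ) : ℚ := (⌊t * (k+1)⌋ : ℚ) / (k+1)

lemma qk_zero (k : ℕ) : qk 0 k = 0 := by simp [qk]

lemma abs_sub_qk (t : ℝ) (k : ℕ) : |t - (qk t k : ℝ)| ≤ 1 / (k+1) := by
  have hk : (0:ℝ) < (k:ℝ) + 1 := by positivity
  have h1 : ((qk t k : ℚ) : ℝ) = (⌊t * (k+1)⌋ : ℝ) / (k+1) := by
    simp [qk]
  rw [h1, abs_le]
  have hfl := Int.floor_le (t * (k+1))
  have hfl2 := Int.lt_floor_add_one (t * (k+1))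
  have e1 : (⌊t * (k+1)⌋ : ℝ) / (k+1) ≤ t := by
    rw [div_le_iff₀ hk]; linarith
  have e2 : t < (⌊t * (k+1)⌋ : ℝ) / (k+1) + 1/(k+1) := by
    rw [← add_div, lt_div_iff₀ hk]; linarith
  constructor <;> linarith

lemma abs_qk_le (t : ℝ) (k : ℕ) : |(qk t k : ℝ)| ≤ |t| + 1 / (k+1) := by
  have h := abs_sub_qk t k
  have : |(qk t k : ℝ)| - |t| ≤ |t - (qk t k : ℝ)| := by
    rw [abs_sub_comm]; exact abs_sub_abs_le_abs_sub _ _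
  linarith

noncomputable def vk (x : ℕ →₀ ℝ) (k : ℕ) : ℕ →₀ ℚ :=
  Finsupp.mapRange (fun t => qk t k) (qk_zero k) x

lemma vk_apply (x : ℕ →₀ ℝ) (k : ℕ) (i : ℕ) : vk x k i = qk (x i) k := rfl

lemma vk_support (x : ℕ →₀ ℝ) (k : ℕ) : (vk x k).support ⊆ x.support :=
  Finsupp.support_mapRange

lemma tendsto_one_div_succ : Tendsto (fun k : ℕ => 1 / ((k:ℝ)+1)) atTop (nhds 0) :=
  tendsto_one_div_add_atTop_nhds_zero_nat

end

namespace S17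
open Filter Finsupp

variable {μ : (ℕ →₀ ℚ) → ℝ}

/-- uniform coordinate bound version -/
lemma sm_le_of_coord (h : IsSeminormV μ) (u : ℕ →₀ ℚ) (S : Finset ℕ) (hS : u.support ⊆ S)
    (ε : ℝ) (hε : ∀ i ∈ S, |(u i : ℝ)| ≤ ε) :
    μ u ≤ ε * ∑ i ∈ S, μ (Finsupp.single i 1) := by
  calc μ u ≤ ∑ i ∈ S, |(u i : ℝ)| * μ (Finsupp.single i 1) := sm_le_coord h u S hS
    _ ≤ ∑ i ∈ S, ε * μ (Finsupp.single i 1) := by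
        refine Finset.sum_le_sum (fun i hi => ?_)
        exact mul_le_mul_of_nonneg_right (hε i hi) (sm_nonneg h _)
    _ = ε * ∑ i ∈ S, μ (Finsupp.single i 1) := by rw [Finset.mul_sum]

lemma cauchy_mu_vk (h : IsSeminormV μ) (x : ℕ →₀ ℝ) :
    CauchySeq (fun k => μ (vk x k)) := by
  refine cauchySeq_of_le_tendsto_0
      (fun N => (2/((N:ℝ)+1)) * ∑ i ∈ x.support, μ (Finsupp.single i 1)) ?_ ?_
  · intro n m N hn hm
    rw [Real.dist_eq]
    refine le_trans (abs_sm_sub h _ _) ?_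
    refine sm_le_of_coord h _ x.support
      (le_trans Finsupp.support_sub (Finset.union_subset (vk_support x n) (vk_support x m))) _ (fun i hi => ?_)
    have b1 := abs_sub_qk (x i) n
    have b2 := abs_sub_qk (x i) m
    have hn1 : 1/((n:ℝ)+1) ≤ 1/((N:ℝ)+1) := by
      apply one_div_le_one_div_of_le (by positivity); exact_mod_cast by omega
    have hm1 : 1/((m:ℝ)+1) ≤ 1/((N:ℝ)+1) := by
      apply one_div_le_one_div_of_le (by positivity); exact_mod_cast by omega
    have : ((vk x n - vk x m) i : ℝ) = (qk (x i) n : ℝ) - (qk (x i) m : ℝ) := by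
      rw [Finsupp.sub_apply]; push_cast [vk_apply]; ring
    rw [this]
    have : |(qk (x i) n : ℝ) - (qk (x i) m : ℝ)|
        ≤ |x i - (qk (x i) n : ℝ)| + |x i - (qk (x i) m : ℝ)| := by
      have := abs_sub (x i - (qk (x i) n : ℝ)) (x i - (qk (x i) m : ℝ))
      calc |(qk (x i) n : ℝ) - (qk (x i) m : ℝ)|
          = |(x i - (qk (x i) m : ℝ)) - (x i - (qk (x i) n : ℝ))| := by ring_nf
        _ ≤ _ := by
            refine le_trans (abs_sub _ _) ?_
            rw [abs_sub_comm (x i) ((qk (x i) n : ℝ))]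
            rw [abs_sub_comm (x i) ((qk (x i) m : ℝ))] at *
            linarith [abs_nonneg (x i - (qk (x i) m : ℝ))]
    have h2 : 2/((N:ℝ)+1) = 1/((N:ℝ)+1) + 1/((N:ℝ)+1) := by ring
    linarith
  · rw [show (0:ℝ) = 0 * ∑ i ∈ x.support, μ (Finsupp.single i 1) by ring]
    apply Tendsto.mul_const
    have : Tendsto (fun N : ℕ => 2 * (1/((N:ℝ)+1))) atTop (nhds (2 * 0)) :=
      tendsto_one_div_succ.const_mul 2
    simpa [mul_one_div, div_eq_mul_inv] using this

noncomputable def nu (μ : (ℕ →₀ ℚ) → ℝ) (x : ℕ →₀ ℝ) : ℝ :=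
  limUnder atTop (fun k => μ (vk x k))

lemma nu_tendsto (h : IsSeminormV μ) (x : ℕ →₀ ℝ) :
    Tendsto (fun k => μ (vk x k)) atTop (nhds (nu μ x)) :=
  (cauchy_mu_vk h x).tendsto_limUnder

lemma tendsto_of_abs_sub_le {a b e : ℕ → ℝ} {L : ℝ}
    (hb : Tendsto b atTop (nhds L)) (he : Tendsto e atTop (nhds 0))
    (hab : ∀ k, |a k - b k| ≤ e k) : Tendsto a atTop (nhds L) := by
  have h0 : Tendsto (fun k => a k - b k) atTop (nhds 0) := by
    apply squeeze_zero_norm (fun k => by simpa [Real.norm_eq_abs] using hab k) he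
  have := h0.add hb
  simpa using this

end S17


namespace S17
open Filter Finsupp

variable {μ : (ℕ →₀ ℚ) → ℝ}

lemma nu_nonneg (h : IsSeminormV μ) (x : ℕ →₀ ℝ) : 0 ≤ nu μ x :=
  ge_of_tendsto' (nu_tendsto h x) (fun k => sm_nonneg h _)

lemma nu_add_le (h : IsSeminormV μ) (x y : ℕ →₀ ℝ) : nu μ (x + y) ≤ nu μ x + nu μ y := by
  classical
  set S := x.support ∪ y.support with hS
  set C := ∑ i ∈ S, μ (Finsupp.single i 1) with hC
  have hCnn : 0 ≤ C := Finset.sum_nonneg (fun i _ => sm_nonneg h _)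
  have key : ∀ k, μ (vk (x+y) k) ≤ μ (vk x k) + μ (vk y k) + (3/((k:ℝ)+1)) * C := by
    intro k
    have hsub : μ (vk (x+y) k) ≤ μ (vk (x+y) k - (vk x k + vk y k)) + μ (vk x k + vk y k) :=
      sm_sub_le h _ _
    have hdiff : μ (vk (x+y) k - (vk x k + vk y k)) ≤ (3/((k:ℝ)+1)) * C := by
      refine sm_le_of_coord h _ S ?_ _ (fun i hi => ?_)
      · refine le_trans Finsupp.support_sub (Finset.union_subset ?_ ?_)
        · exact le_trans (vk_support _ _) (le_trans Finsupp.support_add le_rfl)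
        · exact le_trans Finsupp.support_add
            (Finset.union_subset (le_trans (vk_support _ _) Finset.subset_union_left)
              (le_trans (vk_support _ _) Finset.subset_union_right))
      · have e1 := abs_sub_qk ((x+y) i) k
        have e2 := abs_sub_qk (x i) k
        have e3 := abs_sub_qk (y i) k
        have hxy : (x+y) i = x i + y i := rfl
        have hval : ((vk (x+y) k - (vk x k + vk y k)) i : ℝ)
            = (qk ((x+y) i) k : ℝ) - (qk (x i) k : ℝ) - (qk (y i) k : ℝ) := by
          simp only [Finsupp.sub_apply, Finsupp.add_apply, vk_apply]
          push_cast; ring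
        rw [hval]
        rw [hxy] at e1
        have : |(qk ((x+y) i) k : ℝ) - (qk (x i) k : ℝ) - (qk (y i) k : ℝ)|
            ≤ |x i + y i - (qk ((x+y) i) k : ℝ)| + |x i - (qk (x i) k : ℝ)|
              + |y i - (qk (y i) k : ℝ)| := by
          rw [hxy]
          have : (qk (x i + y i) k : ℝ) - (qk (x i) k : ℝ) - (qk (y i) k : ℝ)
              = -(x i + y i - (qk (x i + y i) k : ℝ)) + (x i - (qk (x i) k : ℝ))
                + (y i - (qk (y i) k : ℝ)) := by ring
          rw [this]
          refine le_trans (abs_add_le _ _) ?_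
          have := abs_add_le (-(x i + y i - (qk (x i + y i) k : ℝ))) (x i - (qk (x i) k : ℝ))
          rw [abs_neg] at this
          linarith
        have h3 : (3:ℝ)/((k:ℝ)+1) = 1/((k:ℝ)+1) + 1/((k:ℝ)+1) + 1/((k:ℝ)+1) := by ring
        rw [hxy] at this ⊢
        linarith
    calc μ (vk (x+y) k) ≤ μ (vk (x+y) k - (vk x k + vk y k)) + μ (vk x k + vk y k) := hsub
      _ ≤ (3/((k:ℝ)+1)) * C + (μ (vk x k) + μ (vk y k)) := by
          have := h.2 (vk x k) (vk y k); linarith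
      _ = μ (vk x k) + μ (vk y k) + (3/((k:ℝ)+1)) * C := by ring
  have hb : Tendsto (fun k => μ (vk x k) + μ (vk y k) + (3/((k:ℝ)+1)) * C) atTop
      (nhds (nu μ x + nu μ y + 0 * C)) := by
    refine Tendsto.add ((nu_tendsto h x).add (nu_tendsto h y)) (Tendsto.mul_const C ?_)
    have : Tendsto (fun k : ℕ => 3 * (1/((k:ℝ)+1))) atTop (nhds (3 * 0)) :=
      tendsto_one_div_succ.const_mul 3
    simpa [mul_one_div, div_eq_mul_inv] using this
  have := le_of_tendsto_of_tendsto' (nu_tendsto h (x+y)) hb key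
  simpa using this

lemma qk_tendsto (c : ℝ) : Tendsto (fun k => ((qk c k : ℚ) : ℝ)) atTop (nhds c) := by
  have : Tendsto (fun k => ((qk c k : ℚ) : ℝ) - c) atTop (nhds 0) := by
    refine squeeze_zero_norm (fun k => ?_) tendsto_one_div_succ
    rw [Real.norm_eq_abs, abs_sub_comm]; exact abs_sub_qk c k
  simpa using this.add (tendsto_const_nhds (x := c))

lemma nu_smul (h : IsSeminormV μ) (c : ℝ) (x : ℕ →₀ ℝ) : nu μ (c • x) = |c| * nu μ x := by
  classical
  set D := ∑ i ∈ x.support, (2 + |c| + |x i|) * μ (Finsupp.single i 1) with hD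
  have hb : Tendsto (fun k => |(qk c k : ℝ)| * μ (vk x k)) atTop (nhds (|c| * nu μ x)) :=
    Tendsto.mul ((qk_tendsto c).abs) (nu_tendsto h x)
  have he : Tendsto (fun k : ℕ => (1/((k:ℝ)+1)) * D) atTop (nhds 0) := by
    simpa using tendsto_one_div_succ.mul_const D
  have key : ∀ k, |μ (vk (c • x) k) - |(qk c k : ℝ)| * μ (vk x k)| ≤ (1/((k:ℝ)+1)) * D := by
    intro k
    have hmu : |(qk c k : ℝ)| * μ (vk x k) = μ (qk c k • vk x k) := (h.1 _ _).symm
    rw [hmu]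
    refine le_trans (abs_sm_sub h _ _) ?_
    have hk1 : (0:ℝ) < (k:ℝ)+1 := by positivity
    have hsupp : (vk (c • x) k - qk c k • vk x k).support ⊆ x.support := by
      refine le_trans Finsupp.support_sub (Finset.union_subset ?_ ?_)
      · exact le_trans (vk_support _ _) (Finsupp.support_smul)
      · exact le_trans (Finsupp.support_smul) (vk_support _ _)
    refine le_trans (sm_le_coord h _ x.support hsupp) ?_
    rw [hD, Finset.mul_sum]
    refine Finset.sum_le_sum (fun i hi => ?_)
    rw [← mul_assoc, mul_comm (1/((k:ℝ)+1)) _]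
    refine mul_le_mul_of_nonneg_right ?_ (sm_nonneg h _)
    -- coordinate estimate
    have hcx : (c • x) i = c * x i := rfl
    have hval : ((vk (c • x) k - qk c k • vk x k) i : ℝ)
        = (qk (c * x i) k : ℝ) - (qk c k : ℝ) * (qk (x i) k : ℝ) := by
      simp only [Finsupp.sub_apply, Finsupp.smul_apply, vk_apply, smul_eq_mul, hcx]
      push_cast; ring
    rw [hval]
    have e1 := abs_sub_qk (c * x i) k
    have e2 := abs_sub_qk (x i) k
    have e3 := abs_sub_qk c k
    have e4 := abs_qk_le (x i) k
    have hdec : (qk (c * x i) k : ℝ) - (qk c k : ℝ) * (qk (x i) k : ℝ)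
        = -((c * x i) - (qk (c * x i) k : ℝ)) + c * (x i - (qk (x i) k : ℝ))
          + (c - (qk c k : ℝ)) * (qk (x i) k : ℝ) := by ring
    rw [hdec]
    have hk1' : 1/((k:ℝ)+1) ≤ 1 := by
      rw [div_le_one hk1]; linarith [Nat.cast_nonneg (α := ℝ) k]
    have t1 : |(-((c * x i) - (qk (c * x i) k : ℝ)))| ≤ 1/((k:ℝ)+1) := by
      rw [abs_neg]; exact e1
    have t2 : |c * (x i - (qk (x i) k : ℝ))| ≤ |c| * (1/((k:ℝ)+1)) := by
      rw [abs_mul]; exact mul_le_mul_of_nonneg_left e2 (abs_nonneg c)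
    have t3 : |(c - (qk c k : ℝ)) * (qk (x i) k : ℝ)| ≤ (1/((k:ℝ)+1)) * (|x i| + 1) := by
      rw [abs_mul]
      have : |(qk (x i) k : ℝ)| ≤ |x i| + 1 := le_trans e4 (by linarith)
      exact mul_le_mul e3 this (abs_nonneg _) (by positivity)
    refine le_trans (abs_add_le _ _) (le_trans (add_le_add_left (abs_add_le _ _) _) ?_)
    have expand : (2 + |c| + |x i|) * (1/((k:ℝ)+1))
        = 1/((k:ℝ)+1) + |c| * (1/((k:ℝ)+1)) + (1/((k:ℝ)+1)) * (|x i| + 1) := by ring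
    rw [expand]
    linarith
  exact tendsto_nhds_unique (nu_tendsto h (c • x)) (tendsto_of_abs_sub_le hb he key)

lemma nu_toC00 (h : IsSeminormV μ) (v : ℕ →₀ ℚ) : nu μ (toC00 v) = μ v := by
  classical
  have hb : Tendsto (fun _ : ℕ => μ v) atTop (nhds (μ v)) := tendsto_const_nhds
  have he : Tendsto (fun k : ℕ => (1/((k:ℝ)+1)) * ∑ i ∈ v.support, μ (Finsupp.single i 1))
      atTop (nhds 0) := by
    simpa using tendsto_one_div_succ.mul_const _
  have key : ∀ k, |μ (vk (toC00 v) k) - μ v| ≤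
      (1/((k:ℝ)+1)) * ∑ i ∈ v.support, μ (Finsupp.single i 1) := by
    intro k
    refine le_trans (abs_sm_sub h _ _) ?_
    refine sm_le_of_coord h _ v.support ?_ _ (fun i hi => ?_)
    · refine le_trans Finsupp.support_sub (Finset.union_subset ?_ le_rfl)
      exact le_trans (vk_support _ _) Finsupp.support_mapRange
    · have hco : (toC00 v) i = ((v i : ℚ) : ℝ) := rfl
      have hval : ((vk (toC00 v) k - v) i : ℝ) = (qk ((toC00 v) i) k : ℝ) - ((v i : ℚ) : ℝ) := by
        simp only [Finsupp.sub_apply, vk_apply]; push_cast; ring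
      rw [hval, ← hco, abs_sub_comm]
      exact abs_sub_qk _ k
  exact tendsto_nhds_unique (nu_tendsto h (toC00 v)) (tendsto_of_abs_sub_le hb he key)

lemma nu_le_coord (h : IsSeminormV μ) (x : ℕ →₀ ℝ) :
    nu μ x ≤ ∑ i ∈ x.support, |x i| * μ (Finsupp.single i 1) := by
  classical
  set C := ∑ i ∈ x.support, μ (Finsupp.single i 1) with hC
  have hb : Tendsto (fun k : ℕ => (∑ i ∈ x.support, |x i| * μ (Finsupp.single i 1))
      + (1/((k:ℝ)+1)) * C) atTop
      (nhds ((∑ i ∈ x.support, |x i| * μ (Finsupp.single i 1)) + 0)) := by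
    refine Tendsto.add tendsto_const_nhds ?_
    simpa using tendsto_one_div_succ.mul_const C
  have key : ∀ k, μ (vk x k) ≤ (∑ i ∈ x.support, |x i| * μ (Finsupp.single i 1))
      + (1/((k:ℝ)+1)) * C := by
    intro k
    refine le_trans (sm_le_coord h _ x.support (vk_support x k)) ?_
    rw [hC, Finset.mul_sum, ← Finset.sum_add_distrib]
    refine Finset.sum_le_sum (fun i hi => ?_)
    rw [vk_apply, ← add_mul]
    refine mul_le_mul_of_nonneg_right ?_ (sm_nonneg h _)
    exact abs_qk_le (x i) k
  have := le_of_tendsto_of_tendsto' (nu_tendsto h x) hb key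
  simpa using this

end S17


namespace S17
open Filter Finsupp UniformSpace

lemma nu_le_of_coord {μ : (ℕ →₀ ℚ) → ℝ} (h : IsSeminormV μ) (x : ℕ →₀ ℝ) (S : Finset ℕ)
    (hS : x.support ⊆ S) (ε : ℝ) (hε : 0 ≤ ε) (hco : ∀ i, |x i| ≤ ε) :
    nu μ x ≤ ε * ∑ i ∈ S, μ (Finsupp.single i 1) := by
  refine le_trans (nu_le_coord h x) ?_
  rw [Finset.mul_sum]
  refine le_trans (Finset.sum_le_sum (fun i _ => mul_le_mul_of_nonneg_right (hco i)
    (sm_nonneg h _))) ?_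
  exact Finset.sum_le_sum_of_subset_of_nonneg hS
    (fun i _ _ => mul_nonneg hε (sm_nonneg h _))

def Syn (_μp : PSp) : Type := ℕ →₀ ℝ

def toSyn (μp : PSp) (x : ℕ →₀ ℝ) : Syn μp := x
def ofSyn (μp : PSp) (x : Syn μp) : ℕ →₀ ℝ := x

noncomputable instance (μp : PSp) : AddCommGroup (Syn μp) :=
  inferInstanceAs (AddCommGroup (ℕ →₀ ℝ))
noncomputable instance (μp : PSp) : Module ℝ (Syn μp) :=
  inferInstanceAs (Module ℝ (ℕ →₀ ℝ))

lemma toSyn_add (μp : PSp) (x y : ℕ →₀ ℝ) :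
    toSyn μp (x + y) = toSyn μp x + toSyn μp y := rfl
lemma toSyn_smul (μp : PSp) (c : ℝ) (x : ℕ →₀ ℝ) :
    toSyn μp (c • x) = c • toSyn μp x := rfl

noncomputable instance (μp : PSp) : SeminormedAddCommGroup (Syn μp) :=
  AddGroupSeminorm.toSeminormedAddCommGroup
    { toFun := fun x => nu μp.1 (ofSyn μp x)
      map_zero' := by
        have := nu_smul μp.2 0 0
        simp at this; exact this
      add_le' := fun x y => nu_add_le μp.2 (ofSyn μp x) (ofSyn μp y)
      neg' := fun x => by
        have := nu_smul μp.2 (-1) (ofSyn μp x)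
        simp at this; exact this }

lemma syn_norm (μp : PSp) (x : Syn μp) : ‖x‖ = nu μp.1 (ofSyn μp x) := rfl

noncomputable instance (μp : PSp) : NormedSpace ℝ (Syn μp) where
  norm_smul_le c x := by
    rw [syn_norm, syn_norm]
    have : ofSyn μp (c • x) = c • (ofSyn μp x) := rfl
    rw [this, nu_smul μp.2]
    simp [Real.norm_eq_abs]

def Xmu (μp : PSp) : Type := Completion (Syn μp)

noncomputable instance (μp : PSp) : NormedAddCommGroup (Xmu μp) :=
  inferInstanceAs (NormedAddCommGroup (Completion (Syn μp)))
noncomputable instance (μp : PSp) : NormedSpace ℝ (Xmu μp) :=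
  inferInstanceAs (NormedSpace ℝ (Completion (Syn μp)))
instance (μp : PSp) : CompleteSpace (Xmu μp) :=
  inferInstanceAs (CompleteSpace (Completion (Syn μp)))

lemma toC00_add (u v : ℕ →₀ ℚ) : toC00 (u + v) = toC00 u + toC00 v := by
  ext i; simp [toC00, Finsupp.mapRange_apply]

lemma toC00_smul (q : ℚ) (v : ℕ →₀ ℚ) : toC00 (q • v) = (q : ℝ) • toC00 v := by
  ext i; simp [toC00, Finsupp.mapRange_apply]

lemma denseRange_toC00 (μp : PSp) : DenseRange (fun v => toSyn μp (toC00 v)) := by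
  rw [Metric.denseRange_iff]
  intro x r hr
  set C := ∑ i ∈ (ofSyn μp x).support, μp.1 (Finsupp.single i 1) with hC
  have hCnn : 0 ≤ C := Finset.sum_nonneg (fun i _ => sm_nonneg μp.2 _)
  obtain ⟨K, hK⟩ := exists_nat_gt (C / r)
  refine ⟨vk (ofSyn μp x) K, ?_⟩
  have hdist : dist x (toSyn μp (toC00 (vk (ofSyn μp x) K)))
      = nu μp.1 ((ofSyn μp x) - toC00 (vk (ofSyn μp x) K)) := by
    rw [dist_eq_norm, syn_norm]; rfl
  rw [hdist]
  have hbound : nu μp.1 ((ofSyn μp x) - toC00 (vk (ofSyn μp x) K)) ≤ (1/((K:ℝ)+1)) * C := by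
    refine nu_le_of_coord μp.2 _ _ ?_ _ (by positivity) (fun i => ?_)
    · refine le_trans Finsupp.support_sub (Finset.union_subset le_rfl ?_)
      exact le_trans Finsupp.support_mapRange (vk_support _ K)
    · have : ((ofSyn μp x) - toC00 (vk (ofSyn μp x) K)) i
          = (ofSyn μp x) i - (qk ((ofSyn μp x) i) K : ℝ) := by
        simp [toC00, Finsupp.mapRange_apply, vk_apply]
      rw [this]
      exact abs_sub_qk _ K
  refine lt_of_le_of_lt hbound ?_
  have hK1 : (0:ℝ) < (K:ℝ)+1 := by positivity
  rw [div_mul_eq_mul_div, one_mul, div_lt_iff₀ hK1]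
  have hCK : C < (K:ℝ) * r := by
    have := (div_lt_iff₀ hr).mp hK
    linarith
  nlinarith [hr]

noncomputable def iota (μp : PSp) : (ℕ →₀ ℚ) → Xmu μp :=
  fun v => ((toSyn μp (toC00 v) : Syn μp) : Completion (Syn μp))

lemma rep_Xmu (μp : PSp) : RepOf μp.1 (Xmu μp) := by
  refine ⟨iota μp, ?_, ?_, ?_, ?_⟩
  · intro u v
    show ((toSyn μp (toC00 (u+v)) : Syn μp) : Completion (Syn μp)) = _
    rw [show toSyn μp (toC00 (u+v)) = toSyn μp (toC00 u) + toSyn μp (toC00 v) by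
      rw [toC00_add]; rfl]
    exact UniformSpace.Completion.coe_add _ _
  · intro q v
    show ((toSyn μp (toC00 (q • v)) : Syn μp) : Completion (Syn μp)) = _
    rw [show toSyn μp (toC00 (q • v)) = (q:ℝ) • toSyn μp (toC00 v) by
      rw [toC00_smul]; rfl]
    exact UniformSpace.Completion.coe_smul _ _
  · intro v
    show ‖((toSyn μp (toC00 v) : Syn μp) : Completion (Syn μp))‖ = _
    rw [UniformSpace.Completion.norm_coe, syn_norm]
    exact nu_toC00 μp.2 v
  · exact DenseRange.comp UniformSpace.Completion.denseRange_coe (denseRange_toC00 μp)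
      (UniformSpace.Completion.continuous_coe (Syn μp))

end S17


namespace S17

def Cond (μ : (ℕ →₀ ℚ) → ℝ) (δ r : ℚ) (v : ℕ →₀ ℚ) : Prop :=
  μ v ≤ 1 ∧ ∀ (n : ℕ) (q : Fin n → ℚ) (w : Fin n → (ℕ →₀ ℚ)),
    (∀ i, 0 < q i) → (∑ i, q i = 1) → (∀ i, μ (w i) < 1) →
    (∀ i, (r : ℝ) < μ (w i - v)) → (δ : ℝ) ≤ μ (v - ∑ i, q i • w i)

variable {X : Type*} [NormedAddCommGroup X] [NormedSpace ℝ X]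

def ratCH (A : Set X) : Set X :=
  {z : X | ∃ (n : ℕ) (q : Fin n → ℚ) (y : Fin n → X),
    (∀ i, 0 < q i) ∧ (∑ i, q i = 1) ∧ (∀ i, y i ∈ A) ∧ z = ∑ i, (q i : ℝ) • y i}

lemma subset_ratCH (A : Set X) : A ⊆ ratCH A := by
  intro a ha
  exact ⟨1, fun _ => 1, fun _ => a, fun _ => one_pos, by simp, fun _ => ha, by simp⟩

lemma ratCH_combo {A : Set X} {a b : X} {p : ℚ} (hp0 : 0 < p) (hp1 : p < 1)
    (ha : a ∈ ratCH A) (hb : b ∈ ratCH A) :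
    (p : ℝ) • a + (1 - (p : ℝ)) • b ∈ ratCH A := by
  obtain ⟨n, q, y, hq0, hq1, hyA, hav⟩ := ha
  obtain ⟨m, s, z, hs0, hs1, hzA, hbv⟩ := hb
  refine ⟨n + m, Fin.append (fun i => p * q i) (fun j => (1 - p) * s j),
    Fin.append y z, ?_, ?_, ?_, ?_⟩
  · refine Fin.addCases (fun i => ?_) (fun j => ?_)
    · rw [Fin.append_left]; exact mul_pos hp0 (hq0 i)
    · rw [Fin.append_right]; exact mul_pos (by linarith) (hs0 j)
  · rw [Fin.sum_univ_add]
    simp only [Fin.append_left, Fin.append_right]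
    rw [← Finset.mul_sum, ← Finset.mul_sum, hq1, hs1]
    ring
  · refine Fin.addCases (fun i => ?_) (fun j => ?_)
    · rw [Fin.append_left]; exact hyA i
    · rw [Fin.append_right]; exact hzA j
  · rw [Fin.sum_univ_add]
    simp only [Fin.append_left, Fin.append_right]
    rw [hav, hbv, Finset.smul_sum, Finset.smul_sum]
    congr 1
    · refine Finset.sum_congr rfl (fun i _ => ?_)
      rw [smul_smul]; push_cast; ring_nf
    · refine Finset.sum_congr rfl (fun j _ => ?_)
      rw [smul_smul]; push_cast; ring_nf

lemma convex_closure_ratCH (A : Set X) : Convex ℝ (closure (ratCH A)) := by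
  intro a ha b hb ta tb hta htb hsum
  rcases eq_or_lt_of_le hta with h0 | hta'
  · rw [← h0]; simp only [zero_smul, zero_add]
    rw [show tb = 1 by linarith, one_smul]; exact hb
  rcases eq_or_lt_of_le htb with h0' | htb'
  · rw [← h0']; simp only [zero_smul, add_zero]
    rw [show ta = 1 by linarith, one_smul]; exact ha
  have hta1 : ta < 1 := by linarith
  rw [Metric.mem_closure_iff]
  intro θ hθ
  obtain ⟨a', ha', hda⟩ := Metric.mem_closure_iff.mp ha (θ/4) (by positivity)
  obtain ⟨b', hb', hdb⟩ := Metric.mem_closure_iff.mp hb (θ/4) (by positivity)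
  set B := ‖a'‖ + ‖b'‖ + 1 with hB
  have hBpos : 0 < B := by positivity
  set s := min (ta/2) (θ/(4*B)) with hs
  have hspos : 0 < s := by
    apply lt_min (by linarith) (by positivity)
  obtain ⟨p, hp1, hp2⟩ := exists_rat_btwn (show ta - s < ta by linarith)
  have hp0 : (0:ℝ) < (p:ℝ) := by
    have : ta - s ≥ ta/2 := by
      have := min_le_left (ta/2) (θ/(4*B)); rw [hs] at *; linarith [min_le_left (ta/2) (θ/(4*B))]
    linarith
  have hp0' : 0 < p := by exact_mod_cast hp0
  have hplt : (p:ℝ) < 1 := by linarith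
  have hplt' : p < 1 := by exact_mod_cast hplt
  refine ⟨(p:ℝ) • a' + (1 - (p:ℝ)) • b', ratCH_combo hp0' hplt' ha' hb', ?_⟩
  rw [dist_eq_norm]
  have hexp : ta • a + tb • b - ((p:ℝ) • a' + (1 - (p:ℝ)) • b')
      = ta • (a - a') + tb • (b - b') + (ta - p) • a' + ((p:ℝ) - ta) • b' := by
    have htb1 : tb = 1 - ta := by linarith
    rw [htb1]
    module
  rw [hexp]
  have e1 : ‖ta • (a - a')‖ ≤ ta * (θ/4) := by
    rw [norm_smul, Real.norm_eq_abs, abs_of_pos hta']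
    refine mul_le_mul_of_nonneg_left ?_ (le_of_lt hta')
    rw [← dist_eq_norm]; exact le_of_lt hda
  have e2 : ‖tb • (b - b')‖ ≤ tb * (θ/4) := by
    rw [norm_smul, Real.norm_eq_abs, abs_of_pos htb']
    refine mul_le_mul_of_nonneg_left ?_ (le_of_lt htb')
    rw [← dist_eq_norm]; exact le_of_lt hdb
  have hps : |ta - (p:ℝ)| ≤ θ/(4*B) := by
    rw [abs_of_pos (by linarith)]
    have := min_le_right (ta/2) (θ/(4*B))
    rw [hs] at hp1
    linarith [min_le_right (ta/2) (θ/(4*B))]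
  have e3 : ‖(ta - (p:ℝ)) • a'‖ + ‖((p:ℝ) - ta) • b'‖ ≤ θ/4 := by
    rw [norm_smul, norm_smul, Real.norm_eq_abs, Real.norm_eq_abs,
      show |(p:ℝ) - ta| = |ta - (p:ℝ)| by rw [abs_sub_comm]]
    have : |ta - (p:ℝ)| * ‖a'‖ + |ta - (p:ℝ)| * ‖b'‖ = |ta - (p:ℝ)| * (‖a'‖ + ‖b'‖) := by ring
    rw [this]
    calc |ta - (p:ℝ)| * (‖a'‖ + ‖b'‖) ≤ (θ/(4*B)) * B := by
          refine mul_le_mul hps (by rw [hB]; linarith) (by positivity) (by positivity)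
      _ = θ/4 := by field_simp
  calc ‖ta • (a - a') + tb • (b - b') + (ta - (p:ℝ)) • a' + ((p:ℝ) - ta) • b'‖
      ≤ ‖ta • (a - a') + tb • (b - b') + (ta - (p:ℝ)) • a'‖ + ‖((p:ℝ) - ta) • b'‖ :=
        norm_add_le _ _
    _ ≤ ‖ta • (a - a') + tb • (b - b')‖ + ‖(ta - (p:ℝ)) • a'‖ + ‖((p:ℝ) - ta) • b'‖ := by
        linarith [norm_add_le (ta • (a - a') + tb • (b - b')) ((ta - (p:ℝ)) • a')]
    _ ≤ ‖ta • (a - a')‖ + ‖tb • (b - b')‖ + ‖(ta - (p:ℝ)) • a'‖ + ‖((p:ℝ) - ta) • b'‖ := by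
        linarith [norm_add_le (ta • (a - a')) (tb • (b - b'))]
    _ ≤ ta * (θ/4) + tb * (θ/4) + θ/4 := by linarith
    _ = θ/4 * (ta + tb) + θ/4 := by ring
    _ < θ := by rw [hsum]; linarith

end S17

namespace S17

variable {X : Type*} [NormedAddCommGroup X] [NormedSpace ℝ X]
variable {μ : (ℕ →₀ ℚ) → ℝ} {ι : (ℕ →₀ ℚ) → X}

section rep

variable (hμ : IsSeminormV μ)
  (hadd : ∀ u v, ι (u + v) = ι u + ι v)
  (hsmul : ∀ (q : ℚ) (v), ι (q • v) = (q : ℝ) • ι v)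
  (hnorm : ∀ v, ‖ι v‖ = μ v) (hdense : DenseRange ι)

include hsmul

lemma iota_zero : ι 0 = 0 := by
  have := hsmul 0 0; simpa using this

include hadd
lemma iota_sub (u v : ℕ →₀ ℚ) : ι (u - v) = ι u - ι v := by
  have h1 : ι (u - v) + ι v = ι u := by
    rw [← hadd]; congr 1; abel
  linear_combination (norm := abel) h1

lemma iota_sum {n : ℕ} (f : Fin n → (ℕ →₀ ℚ)) : ι (∑ i, f i) = ∑ i, ι (f i) := by
  classical
  induction n with
  | zero => simpa using iota_zero hsmul
  | succ n ih =>
    rw [Fin.sum_univ_castSucc, Fin.sum_univ_castSucc, hadd, ih (fun i => f i.castSucc)]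

lemma iota_combo {n : ℕ} (q : Fin n → ℚ) (w : Fin n → (ℕ →₀ ℚ)) :
    ι (∑ i, q i • w i) = ∑ i, (q i : ℝ) • ι (w i) := by
  rw [iota_sum hadd hsmul]
  exact Finset.sum_congr rfl (fun i _ => hsmul _ _)

include hμ hnorm hdense

lemma approx (y : X) (hy : ‖y‖ ≤ 1) {η : ℝ} (hη : 0 < η) :
    ∃ w, μ w < 1 ∧ ‖ι w - y‖ < η := by
  set η₀ := min (η/3) (1/2) with hη₀def
  have hη₀ : 0 < η₀ := lt_min (by positivity) (by norm_num)
  have hη₀half : η₀ ≤ 1/2 := min_le_right _ _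
  have hη₀η : 3 * η₀ ≤ η := by
    have := min_le_left (η/3) (1/2); rw [hη₀def]; linarith [min_le_left (η/3) (1/2)]
  obtain ⟨u, hu⟩ := Metric.denseRange_iff.mp hdense y η₀ hη₀
  have hu' : ‖ι u - y‖ < η₀ := by rw [← dist_eq_norm, dist_comm]; exact hu
  have hμu : μ u < 1 + η₀ := by
    rw [← hnorm]
    calc ‖ι u‖ ≤ ‖ι u - y‖ + ‖y‖ := by
          have := norm_add_le (ι u - y) y; simpa using this
      _ < 1 + η₀ := by linarith
  have hμu0 : 0 ≤ μ u := sm_nonneg hμ u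
  have hlt : (1:ℝ) - η₀ < 1/(1+η₀) := by
    rw [lt_div_iff₀ (by positivity)]; nlinarith
  obtain ⟨p, hpl, hpr⟩ := exists_rat_btwn hlt
  have hp0 : (0:ℝ) < (p:ℝ) := by linarith
  have hppos : 0 < p := by exact_mod_cast hp0
  have hp1 : (p:ℝ) < 1 := by
    have : 1/(1+η₀) < 1 := by rw [div_lt_one (by positivity)]; linarith
    linarith
  refine ⟨p • u, ?_, ?_⟩
  · rw [hμ.1]
    have habs : |(p:ℝ)| = (p:ℝ) := abs_of_pos hp0
    rw [habs]
    calc (p:ℝ) * μ u ≤ (p:ℝ) * (1 + η₀) := mul_le_mul_of_nonneg_left (le_of_lt hμu) (le_of_lt hp0)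
      _ < (1/(1+η₀)) * (1+η₀) := by
          refine mul_lt_mul_of_pos_right hpr (by positivity)
      _ = 1 := by field_simp
  · rw [hsmul]
    calc ‖(p:ℝ) • ι u - y‖ = ‖((p:ℝ) - 1) • ι u + (ι u - y)‖ := by
          congr 1; module
      _ ≤ ‖((p:ℝ) - 1) • ι u‖ + ‖ι u - y‖ := norm_add_le _ _
      _ < |(p:ℝ) - 1| * μ u + η₀ := by
          rw [norm_smul, Real.norm_eq_abs, hnorm]; linarith
      _ ≤ η₀ * (1 + η₀) + η₀ := by
          have h1 : |(p:ℝ) - 1| = 1 - (p:ℝ) := by rw [abs_of_neg (by linarith)]; ring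
          rw [h1]
          have h2 : 1 - (p:ℝ) ≤ η₀ := by linarith
          nlinarith
      _ ≤ 3 * η₀ := by nlinarith
      _ ≤ η := hη₀η

end rep

lemma slice_nonempty (f : X →L[ℝ] ℝ) (hf : ‖f‖ = 1) {α : ℝ} (hα : 0 < α) :
    ∃ y : X, ‖y‖ ≤ 1 ∧ 1 - α < f y := by
  rcases lt_or_ge (1 - α) 0 with hneg | hpos
  · exact ⟨0, by simp, by simpa using hneg⟩
  by_contra hcon
  push_neg at hcon
  have hbound : ‖f‖ ≤ 1 - α := by
    refine f.opNorm_le_bound (by linarith) (fun x => ?_)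
    rcases eq_or_ne x 0 with rfl | hx
    · simp
    have hxn : 0 < ‖x‖ := norm_pos_iff.mpr hx
    have h1 : ‖(‖x‖⁻¹ • x)‖ ≤ 1 := by
      rw [norm_smul, Real.norm_eq_abs, abs_inv, abs_of_pos hxn, inv_mul_cancel₀ (ne_of_gt hxn)]
    have h2 := hcon _ h1
    have h3 := hcon _ (by rw [norm_neg]; exact h1 : ‖-(‖x‖⁻¹ • x)‖ ≤ 1)
    rw [map_neg] at h3
    have h4 : |f (‖x‖⁻¹ • x)| ≤ 1 - α := abs_le.mpr ⟨by linarith, h2⟩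
    have h5 : f (‖x‖⁻¹ • x) = ‖x‖⁻¹ * f x := by rw [map_smul]; rfl
    rw [h5, abs_mul, abs_inv, abs_of_pos hxn] at h4
    rw [Real.norm_eq_abs]
    calc |f x| = ‖x‖ * (‖x‖⁻¹ * |f x|) := by field_simp
      _ ≤ ‖x‖ * (1 - α) := mul_le_mul_of_nonneg_left h4 (le_of_lt hxn)
      _ = (1 - α) * ‖x‖ := by ring
  rw [hf] at hbound
  linarith

end S17

namespace S17

variable {X : Type*} [NormedAddCommGroup X] [NormedSpace ℝ X]
variable {μ : (ℕ →₀ ℚ) → ℝ} {ι : (ℕ →₀ ℚ) → X}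

section rep2

variable (hμ : IsSeminormV μ)
  (hadd : ∀ u v, ι (u + v) = ι u + ι v)
  (hsmul : ∀ (q : ℚ) (v), ι (q • v) = (q : ℝ) • ι v)
  (hnorm : ∀ v, ‖ι v‖ = μ v) (hdense : DenseRange ι)

include hμ hadd hsmul hnorm hdense

lemma fval_le_norm (f : X →L[ℝ] ℝ) (hf : ‖f‖ = 1) (z : X) : f z ≤ ‖z‖ := by
  have := f.le_opNorm z
  rw [hf, one_mul, Real.norm_eq_abs] at this
  exact le_trans (le_abs_self _) this

lemma d1 (hD : BallDentable X) (r : ℚ) (hr : 0 < r) :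
    ∃ δ : ℚ, 0 < δ ∧ ∃ v, Cond μ δ r v := by
  obtain ⟨S, ⟨f, α, hf, hα, hSe⟩, hdiam⟩ := hD (r:ℝ) (by exact_mod_cast hr)
  obtain ⟨y0, hy01, hy02⟩ := slice_nonempty f hf hα
  set γ := f y0 - (1 - α) with hγ
  have hγpos : 0 < γ := by rw [hγ]; linarith
  obtain ⟨v, hv1, hv2⟩ := approx hμ hadd hsmul hnorm hdense y0 hy01 (show 0 < γ/2 by positivity)
  have hfv : 1 - α + γ/2 < f (ι v) := by
    have h1 : |f (ι v) - f y0| ≤ ‖ι v - y0‖ := by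
      rw [← map_sub]
      have := f.le_opNorm (ι v - y0)
      rw [hf, one_mul, Real.norm_eq_abs] at this
      exact this
    have h2 : f y0 - f (ι v) ≤ |f (ι v) - f y0| := by
      rw [abs_sub_comm]; exact le_abs_self _
    have : f y0 = 1 - α + γ := by rw [hγ]; ring
    linarith
  obtain ⟨δ, hδl, hδr⟩ := exists_rat_btwn (show (0:ℝ) < γ/2 by positivity)
  have hδpos : 0 < δ := by exact_mod_cast hδl
  refine ⟨δ, hδpos, v, le_of_lt hv1, ?_⟩
  intro n q w hq0 hq1 hw1 hwdist
  have hiv_mem : ι v ∈ S := by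
    rw [hSe]
    exact ⟨by rw [hnorm]; exact le_of_lt hv1, by linarith⟩
  have hSbd : Bornology.IsBounded S := by
    refine Bornology.IsBounded.subset (Metric.isBounded_closedBall (x := (0:X)) (r := 1)) ?_
    rw [hSe]; intro z hz; rw [Metric.mem_closedBall, dist_zero_right]; exact hz.1
  have hfw : ∀ i, f (ι (w i)) ≤ 1 - α := by
    intro i
    by_contra hcon
    push_neg at hcon
    have hmem : ι (w i) ∈ S := by
      rw [hSe]; exact ⟨by rw [hnorm]; exact le_of_lt (hw1 i), hcon⟩
    have hd : dist (ι (w i)) (ι v) ≤ Metric.diam S := Metric.dist_le_diam_of_mem hSbd hmem hiv_mem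
    have : dist (ι (w i)) (ι v) = μ (w i - v) := by
      rw [dist_eq_norm, ← iota_sub hadd hsmul, hnorm]
    rw [this] at hd
    have := hwdist i
    linarith
  have hsum_le : f (∑ i, (q i : ℝ) • ι (w i)) ≤ 1 - α := by
    rw [map_sum]
    have : ∀ i ∈ Finset.univ, f ((q i : ℝ) • ι (w i)) ≤ (q i : ℝ) * (1 - α) := by
      intro i _
      rw [map_smul, smul_eq_mul]
      refine mul_le_mul_of_nonneg_left (hfw i) ?_
      exact_mod_cast le_of_lt (hq0 i)
    refine le_trans (Finset.sum_le_sum this) ?_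
    rw [← Finset.sum_mul]
    have : (∑ i, (q i : ℝ)) = 1 := by
      rw [← Rat.cast_sum, hq1, Rat.cast_one]
    rw [this, one_mul]
  have hkey : γ/2 ≤ μ (v - ∑ i, q i • w i) := by
    have hrw : μ (v - ∑ i, q i • w i) = ‖ι v - ∑ i, (q i : ℝ) • ι (w i)‖ := by
      rw [← hnorm, iota_sub hadd hsmul, iota_combo hadd hsmul]
    rw [hrw]
    have hfle : f (ι v - ∑ i, (q i : ℝ) • ι (w i)) ≤ ‖ι v - ∑ i, (q i : ℝ) • ι (w i)‖ :=
      fval_le_norm hμ hadd hsmul hnorm hdense f hf _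
    rw [map_sub] at hfle
    linarith
  linarith

lemma exists_pos_of_dentable (hD : BallDentable X) : ∃ v, 0 < μ v := by
  obtain ⟨S, ⟨f, α, hf, hα, hSe⟩, _⟩ := hD 1 one_pos
  obtain ⟨y, hy1, hy2⟩ := slice_nonempty f hf (show (0:ℝ) < 1/2 by norm_num)
  have hfy : 0 < f y := by linarith
  have hyn : 0 < ‖y‖ := by
    rcases eq_or_ne y 0 with rfl | hy0
    · simp at hfy
    · exact norm_pos_iff.mpr hy0
  obtain ⟨u, hu⟩ := Metric.denseRange_iff.mp hdense y (f y) hfy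
  have hu' : ‖ι u - y‖ < f y := by rw [← dist_eq_norm, dist_comm]; exact hu
  refine ⟨u, ?_⟩
  rw [← hnorm]
  rcases eq_or_ne (ι u) 0 with h0 | h0
  · exfalso
    rw [h0] at hu'
    have : |f y| ≤ ‖y‖ := by
      have := f.le_opNorm y; rw [hf, one_mul, Real.norm_eq_abs] at this; exact this
    have h1 : ‖(0:X) - y‖ = ‖y‖ := by simp
    rw [h1] at hu'
    have h2 : f y ≤ |f y| := le_abs_self _
    linarith
  · exact norm_pos_iff.mpr h0

end rep2

end S17

namespace S17

variable {X : Type*} [NormedAddCommGroup X] [NormedSpace ℝ X]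
variable {μ : (ℕ →₀ ℚ) → ℝ} {ι : (ℕ →₀ ℚ) → X}

section rep3

variable (hμ : IsSeminormV μ)
  (hadd : ∀ u v, ι (u + v) = ι u + ι v)
  (hsmul : ∀ (q : ℚ) (v : ℕ →₀ ℚ), ι (q • v) = (q : ℝ) • ι v)
  (hnorm : ∀ v, ‖ι v‖ = μ v) (hdense : DenseRange ι)

include hμ hadd hsmul hnorm hdense

lemma d2 (h0 : ∃ v, 0 < μ v)
    (hC : ∀ r : ℚ, 0 < r → ∃ δ : ℚ, 0 < δ ∧ ∃ v, Cond μ δ r v) :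
    BallDentable X := by
  intro ε hε
  obtain ⟨r, hr0, hrε⟩ := exists_rat_btwn (show (0:ℝ) < ε/8 by positivity)
  have hr0' : 0 < r := by exact_mod_cast hr0
  obtain ⟨δ, hδ, v, hv1, hv2⟩ := hC r hr0'
  have hδR : (0:ℝ) < (δ:ℝ) := by exact_mod_cast hδ
  set x := ι v with hxdef
  set A := {y : X | ‖y‖ ≤ 1 ∧ 3*(r:ℝ) ≤ ‖y - x‖} with hA
  -- key estimate
  have hkey : ∀ z ∈ ratCH A, (δ:ℝ) ≤ ‖x - z‖ := by
    rintro z ⟨n, q, y, hq0, hq1, hyA, rfl⟩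
    refine le_of_forall_pos_le_add (fun θ hθ => ?_)
    set η := min θ (r:ℝ) with hηdef
    have hη : 0 < η := lt_min hθ (by exact_mod_cast hr0')
    have happ : ∀ i, ∃ w, μ w < 1 ∧ ‖ι w - y i‖ < η := fun i =>
      approx hμ hadd hsmul hnorm hdense (y i) (hyA i).1 hη
    choose w hw1 hw2 using happ
    have hwd : ∀ i, (r:ℝ) < μ (w i - v) := by
      intro i
      have h1 : μ (w i - v) = ‖ι (w i) - x‖ := by
        rw [← hnorm, iota_sub hadd hsmul]
      rw [h1]
      have h2 : ‖y i - x‖ - ‖ι (w i) - y i‖ ≤ ‖ι (w i) - x‖ := by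
        have htr := norm_add_le (y i - ι (w i)) (ι (w i) - x)
        have he : y i - ι (w i) + (ι (w i) - x) = y i - x := by abel
        rw [he] at htr
        have hrev : ‖y i - ι (w i)‖ = ‖ι (w i) - y i‖ := norm_sub_rev _ _
        linarith
      have h3 := (hyA i).2
      have h4 := hw2 i
      have hηr : η ≤ (r:ℝ) := min_le_right _ _
      linarith
    have hcond := hv2 n q w hq0 hq1 hw1 hwd
    have hrw : μ (v - ∑ i, q i • w i) = ‖x - ∑ i, (q i : ℝ) • ι (w i)‖ := by
      rw [← hnorm, iota_sub hadd hsmul, iota_combo hadd hsmul]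
    rw [hrw] at hcond
    have hclose : ‖(∑ i, (q i : ℝ) • ι (w i)) - ∑ i, (q i : ℝ) • y i‖ ≤ η := by
      rw [← Finset.sum_sub_distrib]
      refine le_trans (norm_sum_le _ _) ?_
      have hterm : ∀ i ∈ Finset.univ, ‖(q i : ℝ) • ι (w i) - (q i : ℝ) • y i‖
          ≤ (q i : ℝ) * η := by
        intro i _
        rw [← smul_sub, norm_smul, Real.norm_eq_abs,
          abs_of_pos (show (0:ℝ) < (q i : ℝ) by exact_mod_cast hq0 i)]
        exact mul_le_mul_of_nonneg_left (le_of_lt (hw2 i))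
          (by exact_mod_cast le_of_lt (hq0 i))
      refine le_trans (Finset.sum_le_sum hterm) ?_
      rw [← Finset.sum_mul, ← Rat.cast_sum, hq1, Rat.cast_one, one_mul]
    have htri : ‖x - ∑ i, (q i : ℝ) • ι (w i)‖
        ≤ ‖x - ∑ i, (q i : ℝ) • y i‖ + ‖(∑ i, (q i : ℝ) • ι (w i)) - ∑ i, (q i : ℝ) • y i‖ := by
      have he : x - ∑ i, (q i : ℝ) • ι (w i)
          = (x - ∑ i, (q i : ℝ) • y i) - ((∑ i, (q i : ℝ) • ι (w i)) - ∑ i, (q i : ℝ) • y i) := by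
        abel
      rw [he]
      exact norm_sub_le _ _
    have hηθ : η ≤ θ := min_le_left _ _
    linarith
  have hxK : x ∉ closure (ratCH A) := by
    intro hmem
    obtain ⟨z, hz, hdz⟩ := Metric.mem_closure_iff.mp hmem (δ:ℝ) hδR
    rw [dist_eq_norm] at hdz
    exact absurd hdz (not_lt.mpr (hkey z hz))
  have hdiam_goal : ∀ (g : X →L[ℝ] ℝ) (α : ℝ), ‖g‖ = 1 → 0 < α →
      ({y : X | ‖y‖ ≤ 1 ∧ 1 - α < g y} ⊆ Metric.closedBall x (3*(r:ℝ))) →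
      ∃ S : Set X, IsSlice S ∧ Metric.diam S < ε := by
    intro g α hg hα hsub
    refine ⟨{y : X | ‖y‖ ≤ 1 ∧ 1 - α < g y}, ⟨g, α, hg, hα, rfl⟩, ?_⟩
    have h1 : Metric.diam {y : X | ‖y‖ ≤ 1 ∧ 1 - α < g y}
        ≤ Metric.diam (Metric.closedBall x (3*(r:ℝ))) :=
      Metric.diam_mono hsub Metric.isBounded_closedBall
    have h2 : Metric.diam (Metric.closedBall x (3*(r:ℝ))) ≤ 2 * (3*(r:ℝ)) :=
      Metric.diam_closedBall (by positivity)
    have : (r:ℝ) < ε/8 := hrε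
    linarith
  rcases Set.eq_empty_or_nonempty (closure (ratCH A)) with hKe | ⟨a, ha⟩
  · -- A is empty; any slice is small
    have hAe : A = ∅ := by
      rw [Set.eq_empty_iff_forall_notMem]
      intro y hy
      have : y ∈ closure (ratCH A) := subset_closure (subset_ratCH A hy)
      rw [hKe] at this
      exact this
    obtain ⟨v0, hv0⟩ := h0
    have hx0 : ι v0 ≠ 0 := by
      intro h
      rw [← hnorm] at hv0
      rw [h] at hv0
      simp at hv0
    obtain ⟨g, hg, _⟩ := exists_dual_vector ℝ (ι v0) (norm_ne_zero_iff.mpr hx0)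
    refine hdiam_goal g 1 hg one_pos ?_
    intro y hy
    rw [Metric.mem_closedBall, dist_eq_norm]
    by_contra hcon
    push_neg at hcon
    have : y ∈ A := ⟨hy.1, le_of_lt hcon⟩
    rw [hAe] at this
    exact this
  · obtain ⟨f, u, hfu, hux⟩ := geometric_hahn_banach_closed_point
      (convex_closure_ratCH A) isClosed_closure hxK
    have hf0 : f ≠ 0 := by
      intro h
      rw [h] at hfu hux
      have h1 := hfu a ha
      simp at h1 hux
      linarith
    have hfn : 0 < ‖f‖ := norm_pos_iff.mpr hf0
    set g : X →L[ℝ] ℝ := ‖f‖⁻¹ • f with hgdef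
    have hg : ‖g‖ = 1 := by
      rw [hgdef]
      rw [norm_smul ‖f‖⁻¹ f, Real.norm_eq_abs, abs_inv, abs_of_pos hfn,
        inv_mul_cancel₀ (ne_of_gt hfn)]
    have hxle : ‖x‖ ≤ 1 := by rw [hxdef, hnorm]; exact hv1
    have hufx : u < ‖f‖ := by
      have h1 : f x ≤ ‖f‖ * ‖x‖ := by
        have := f.le_opNorm x
        rw [Real.norm_eq_abs] at this
        exact le_trans (le_abs_self _) this
      have h2 : ‖f‖ * ‖x‖ ≤ ‖f‖ := by
        calc ‖f‖ * ‖x‖ ≤ ‖f‖ * 1 := mul_le_mul_of_nonneg_left hxle (le_of_lt hfn)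
          _ = ‖f‖ := mul_one _
      linarith
    set α := 1 - u/‖f‖ with hαdef
    have hα : 0 < α := by
      rw [hαdef]
      have : u/‖f‖ < 1 := (div_lt_one hfn).mpr hufx
      linarith
    refine hdiam_goal g α hg hα ?_
    intro y hy
    obtain ⟨hy1, hy2⟩ := hy
    have hgy : u/‖f‖ < g y := by rw [hαdef] at hy2; linarith
    have hfy : u < f y := by
      have h1 : g y = ‖f‖⁻¹ * f y := by rw [hgdef]; rfl
      rw [h1] at hgy
      have h2 := mul_lt_mul_of_pos_left hgy hfn
      have h3 : ‖f‖ * (u/‖f‖) = u := by field_simp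
      have h4 : ‖f‖ * (‖f‖⁻¹ * f y) = f y := by field_simp
      linarith
    rw [Metric.mem_closedBall, dist_eq_norm]
    by_contra hcon
    push_neg at hcon
    have hyA : y ∈ A := ⟨hy1, le_of_lt hcon⟩
    have : f y < u := hfu y (subset_closure (subset_ratCH A hyA))
    linarith

end rep3

end S17

namespace S17

lemma main_iff (μp : PSp) :
    XmuSat μp.1 (fun X => BallDentable X.carrier) ↔
      ((∃ v, 0 < μp.1 v) ∧ ∀ r : ℚ, 0 < r → ∃ δ : ℚ, 0 < δ ∧ ∃ v, Cond μp.1 δ r v) := by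
  constructor
  · intro hsat
    obtain ⟨ι, hadd, hsmul, hnorm, hdense⟩ := rep_Xmu μp
    have hd : BallDentable (Xmu μp) :=
      hsat (BanachSp.mk (Xmu μp)) ⟨ι, hadd, hsmul, hnorm, hdense⟩
    exact ⟨exists_pos_of_dentable μp.2 hadd hsmul hnorm hdense hd,
           fun r hr => d1 μp.2 hadd hsmul hnorm hdense hd r hr⟩
  · rintro ⟨h0, hC⟩ X hrep
    obtain ⟨ι, hadd, hsmul, hnorm, hdense⟩ := hrep
    exact d2 μp.2 hadd hsmul hnorm hdense h0 hC

lemma contEval (u : ℕ →₀ ℚ) : Continuous (fun μp : PSp => μp.1 u) :=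
  (continuous_apply u).comp continuous_subtype_val

def CSet (δ r : ℚ) (v : ℕ →₀ ℚ) : Set PSp := {μp : PSp | Cond μp.1 δ r v}

def NSet (p : (ℕ →₀ ℚ) × {s : ℚ // 0 < s}) : Set PSp :=
  {μp : PSp | ((p.2.1 : ℚ) : ℝ) ≤ μp.1 p.1}

lemma isClosed_NSet (p : (ℕ →₀ ℚ) × {s : ℚ // 0 < s}) : IsClosed (NSet p) :=
  isClosed_le continuous_const (contEval p.1)

lemma isClosed_CSet (δ r : ℚ) (v : ℕ →₀ ℚ) : IsClosed (CSet δ r v) := by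
  have hrw : CSet δ r v = ({μp : PSp | μp.1 v ≤ 1} ∩
      ⋂ (n : ℕ) (q : Fin n → ℚ) (w : Fin n → (ℕ →₀ ℚ)),
        {μp : PSp | (∀ i, 0 < q i) → (∑ i, q i = 1) → (∀ i, μp.1 (w i) < 1) →
          (∀ i, (r : ℝ) < μp.1 (w i - v)) → (δ : ℝ) ≤ μp.1 (v - ∑ i, q i • w i)}) := by
    ext μp
    simp only [CSet, Cond, Set.mem_inter_iff, Set.mem_setOf_eq, Set.mem_iInter]
  rw [hrw]
  refine IsClosed.inter (isClosed_le (contEval v) continuous_const) ?_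
  refine isClosed_iInter (fun n => isClosed_iInter (fun q => isClosed_iInter (fun w => ?_)))
  by_cases h1 : ∀ i, 0 < q i
  · by_cases h2 : ∑ i, q i = 1
    · have heq : {μp : PSp | (∀ i, 0 < q i) → (∑ i, q i = 1) → (∀ i, μp.1 (w i) < 1) →
          (∀ i, (r : ℝ) < μp.1 (w i - v)) → (δ : ℝ) ≤ μp.1 (v - ∑ i, q i • w i)}
          = {μp : PSp | (∀ i, μp.1 (w i) < 1) ∧ (∀ i, (r : ℝ) < μp.1 (w i - v)) ∧
              μp.1 (v - ∑ i, q i • w i) < (δ : ℝ)}ᶜ := by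
        ext μp
        simp only [Set.mem_setOf_eq, Set.mem_compl_iff]
        constructor
        · intro h hcon
          exact absurd (h h1 h2 hcon.1 hcon.2.1) (not_le.mpr hcon.2.2)
        · intro h _ _ ha hb
          by_contra hc
          exact h ⟨ha, hb, not_le.mp hc⟩
      rw [heq]
      refine IsOpen.isClosed_compl ?_
      have e1 : {μp : PSp | (∀ i, μp.1 (w i) < 1) ∧ (∀ i, (r : ℝ) < μp.1 (w i - v)) ∧
            μp.1 (v - ∑ i, q i • w i) < (δ : ℝ)}
          = (⋂ i, {μp : PSp | μp.1 (w i) < 1}) ∩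
            ((⋂ i, {μp : PSp | (r : ℝ) < μp.1 (w i - v)}) ∩
              {μp : PSp | μp.1 (v - ∑ i, q i • w i) < (δ : ℝ)}) := by
        ext μp
        simp only [Set.mem_inter_iff, Set.mem_iInter, Set.mem_setOf_eq]
      rw [e1]
      exact ((isOpen_iInter_of_finite fun i =>
        isOpen_lt (contEval (w i)) continuous_const).inter
        ((isOpen_iInter_of_finite fun i =>
          isOpen_lt continuous_const (contEval (w i - v))).inter
          (isOpen_lt (contEval _) continuous_const)))
    · have heq : {μp : PSp | (∀ i, 0 < q i) → (∑ i, q i = 1) → (∀ i, μp.1 (w i) < 1) →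
          (∀ i, (r : ℝ) < μp.1 (w i - v)) → (δ : ℝ) ≤ μp.1 (v - ∑ i, q i • w i)}
          = Set.univ := Set.eq_univ_of_forall (fun μp ha hb => absurd hb h2)
      rw [heq]; exact isClosed_univ
  · have heq : {μp : PSp | (∀ i, 0 < q i) → (∑ i, q i = 1) → (∀ i, μp.1 (w i) < 1) →
        (∀ i, (r : ℝ) < μp.1 (w i - v)) → (δ : ℝ) ≤ μp.1 (v - ∑ i, q i • w i)}
        = Set.univ := Set.eq_univ_of_forall (fun μp ha => absurd ha h1)
    rw [heq]; exact isClosed_univ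

end S17

theorem stmt17 : IsFsigmaDelta (XmuP (fun X => BallDentable X.carrier)) := by
  classical
  haveI : Nonempty {r : ℚ // 0 < r} := ⟨⟨1, one_pos⟩⟩
  haveI : Nonempty ((ℕ →₀ ℚ) × {s : ℚ // 0 < s}) := ⟨⟨0, ⟨1, one_pos⟩⟩⟩
  haveI : Nonempty ({δ : ℚ // 0 < δ} × (ℕ →₀ ℚ)) := ⟨⟨⟨1, one_pos⟩, 0⟩⟩
  obtain ⟨σ0, hσ0⟩ := exists_surjective_nat {r : ℚ // 0 < r}
  obtain ⟨σ1, hσ1⟩ := exists_surjective_nat ((ℕ →₀ ℚ) × {s : ℚ // 0 < s})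
  obtain ⟨σ2, hσ2⟩ := exists_surjective_nat ({δ : ℚ // 0 < δ} × (ℕ →₀ ℚ))
  refine ⟨fun n => match n with
    | 0 => fun m => S17.NSet (σ1 m)
    | (n+1) => fun m => S17.CSet ((σ2 m).1.1) ((σ0 n).1) ((σ2 m).2), ?_, ?_⟩
  · intro n m
    match n with
    | 0 => exact S17.isClosed_NSet (σ1 m)
    | (n+1) => exact S17.isClosed_CSet _ _ _
  · ext μp
    rw [Set.mem_iInter]
    constructor
    · intro hsat
      obtain ⟨h0, hC⟩ := (S17.main_iff μp).mp hsat
      intro n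
      match n with
      | 0 =>
        obtain ⟨v, hv⟩ := h0
        obtain ⟨s, hs0, hs1⟩ := exists_rat_btwn hv
        have hspos : 0 < s := by exact_mod_cast hs0
        obtain ⟨m, hm⟩ := hσ1 (v, ⟨s, hspos⟩)
        refine Set.mem_iUnion.mpr ⟨m, ?_⟩
        show (((σ1 m).2.1 : ℚ) : ℝ) ≤ μp.1 (σ1 m).1
        rw [hm]
        exact le_of_lt hs1
      | (n+1) =>
        obtain ⟨δ, hδ, v, hcond⟩ := hC ((σ0 n).1) ((σ0 n).2)
        obtain ⟨m, hm⟩ := hσ2 (⟨δ, hδ⟩, v)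
        refine Set.mem_iUnion.mpr ⟨m, ?_⟩
        show S17.Cond μp.1 ((σ2 m).1.1) ((σ0 n).1) ((σ2 m).2)
        rw [hm]
        exact hcond
    · intro h
      refine (S17.main_iff μp).mpr ⟨?_, ?_⟩
      · obtain ⟨m, hm⟩ := Set.mem_iUnion.mp (h 0)
        refine ⟨(σ1 m).1, ?_⟩
        have hs : (0:ℝ) < (((σ1 m).2.1 : ℚ) : ℝ) := by exact_mod_cast (σ1 m).2.2
        exact lt_of_lt_of_le hs hm
      · intro r hr
        obtain ⟨n, hn⟩ := hσ0 ⟨r, hr⟩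
        obtain ⟨m, hm⟩ := Set.mem_iUnion.mp (h (n+1))
        refine ⟨(σ2 m).1.1, (σ2 m).1.2, (σ2 m).2, ?_⟩
        have : (σ0 n).1 = r := by rw [hn]
        rw [← this]
        exact hm
end
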